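/- arXiv:1905.08049 — 5 statements merged into one kernel-verified Lean document; each statement's English description precedes it below -/
import Mathlib

section
/- The map ι : G_n^2 → G_{n,P}^2 defined on generators by ι(a_{ij}) = a_{ij}^0 is an injective group homomorphism. -/
/-- Index type for the generators `a_{ij}`: two-element subsets of `Fin n`. -/
abbrev PairIdx (n : ℕ) := {s : Finset (Fin n) // s.card = 2}

/-- The unordered pair `{i,j}` as an index. -/
def mkPair {n : ℕ} (i j : Fin n) (h : i ≠ j) : PairIdx n := ⟨{i, j}, Finset.card_pair h⟩

/-- Relations of the group `G_n^2`. -/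
def gn2Rels (n : ℕ) : Set (FreeGroup (PairIdx n)) :=
  {r | (∃ (i j : Fin n) (h : i ≠ j),
          r = FreeGroup.of (mkPair i j h) * FreeGroup.of (mkPair i j h)) ∨
       (∃ (i j k l : Fin n) (hij : i ≠ j) (hkl : k ≠ l),
          i ≠ k ∧ i ≠ l ∧ j ≠ k ∧ j ≠ l ∧
          r = FreeGroup.of (mkPair i j hij) * FreeGroup.of (mkPair k l hkl) *
              (FreeGroup.of (mkPair i j hij))⁻¹ * (FreeGroup.of (mkPair k l hkl))⁻¹) ∨
       (∃ (i j k : Fin n) (hij : i ≠ j) (hik : i ≠ k) (hjk : j ≠ k),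
          r = FreeGroup.of (mkPair i j hij) * FreeGroup.of (mkPair i k hik) *
              FreeGroup.of (mkPair j k hjk) *
              (FreeGroup.of (mkPair j k hjk) * FreeGroup.of (mkPair i k hik) *
               FreeGroup.of (mkPair i j hij))⁻¹)}

/-- The group `G_n^2`. -/
abbrev Gn2 (n : ℕ) := PresentedGroup (gn2Rels n)

/-- The generator `a_{ij}` of `G_n^2`. -/
def A2 {n : ℕ} (i j : Fin n) (h : i ≠ j) : Gn2 n := PresentedGroup.of (mkPair i j h)

/-- Relations of the group `G_{n,P}^2` (`G_n^2` with parity). -/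
def gnP2Rels (n : ℕ) : Set (FreeGroup (PairIdx n × ZMod 2)) :=
  {r | (∃ (i j : Fin n) (h : i ≠ j) (ε : ZMod 2),
          r = FreeGroup.of (mkPair i j h, ε) * FreeGroup.of (mkPair i j h, ε)) ∨
       (∃ (i j k l : Fin n) (hij : i ≠ j) (hkl : k ≠ l) (ε₁ ε₂ : ZMod 2),
          i ≠ k ∧ i ≠ l ∧ j ≠ k ∧ j ≠ l ∧
          r = FreeGroup.of (mkPair i j hij, ε₁) * FreeGroup.of (mkPair k l hkl, ε₂) *
              (FreeGroup.of (mkPair i j hij, ε₁))⁻¹ * (FreeGroup.of (mkPair k l hkl, ε₂))⁻¹) ∨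
       (∃ (i j k : Fin n) (hij : i ≠ j) (hik : i ≠ k) (hjk : j ≠ k)
          (εij εik εjk : ZMod 2), εij + εik + εjk = 0 ∧
          r = FreeGroup.of (mkPair i j hij, εij) * FreeGroup.of (mkPair i k hik, εik) *
              FreeGroup.of (mkPair j k hjk, εjk) *
              (FreeGroup.of (mkPair j k hjk, εjk) * FreeGroup.of (mkPair i k hik, εik) *
               FreeGroup.of (mkPair i j hij, εij))⁻¹)}

/-- The group `G_{n,P}^2`. -/
abbrev GnP2 (n : ℕ) := PresentedGroup (gnP2Rels n)

/-- The generator `a_{ij}^ε` of `G_{n,P}^2`. -/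
def AP {n : ℕ} (i j : Fin n) (h : i ≠ j) (ε : ZMod 2) : GnP2 n :=
  PresentedGroup.of (mkPair i j h, ε)

/-- Alphabet of `G_{n,D}^2`: crossing generators `a_{ij}` and point generators `τ_i`. -/
abbrev DIdx (n : ℕ) := PairIdx n ⊕ Fin n

/-- Relations of the group `G_{n,D}^2` (`G_n^2` with points). -/
def gnD2Rels (n : ℕ) : Set (FreeGroup (DIdx n)) :=
  {r | (∃ (i j : Fin n) (h : i ≠ j),
          r = FreeGroup.of (Sum.inl (mkPair i j h) : DIdx n) *
              FreeGroup.of (Sum.inl (mkPair i j h) : DIdx n)) ∨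
       (∃ (i j k l : Fin n) (hij : i ≠ j) (hkl : k ≠ l),
          i ≠ k ∧ i ≠ l ∧ j ≠ k ∧ j ≠ l ∧
          r = FreeGroup.of (Sum.inl (mkPair i j hij) : DIdx n) *
              FreeGroup.of (Sum.inl (mkPair k l hkl) : DIdx n) *
              (FreeGroup.of (Sum.inl (mkPair i j hij) : DIdx n))⁻¹ *
              (FreeGroup.of (Sum.inl (mkPair k l hkl) : DIdx n))⁻¹) ∨
       (∃ (i j k : Fin n) (hij : i ≠ j) (hik : i ≠ k) (hjk : j ≠ k),
          r = FreeGroup.of (Sum.inl (mkPair i j hij) : DIdx n) *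
              FreeGroup.of (Sum.inl (mkPair i k hik) : DIdx n) *
              FreeGroup.of (Sum.inl (mkPair j k hjk) : DIdx n) *
              (FreeGroup.of (Sum.inl (mkPair j k hjk) : DIdx n) *
               FreeGroup.of (Sum.inl (mkPair i k hik) : DIdx n) *
               FreeGroup.of (Sum.inl (mkPair i j hij) : DIdx n))⁻¹) ∨
       (∃ i : Fin n,
          r = FreeGroup.of (Sum.inr i : DIdx n) * FreeGroup.of (Sum.inr i : DIdx n)) ∨
       (∃ i j : Fin n,
          r = FreeGroup.of (Sum.inr i : DIdx n) * FreeGroup.of (Sum.inr j : DIdx n) *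
              (FreeGroup.of (Sum.inr i : DIdx n))⁻¹ * (FreeGroup.of (Sum.inr j : DIdx n))⁻¹) ∨
       (∃ (i j : Fin n) (h : i ≠ j),
          r = FreeGroup.of (Sum.inr i : DIdx n) * FreeGroup.of (Sum.inr j : DIdx n) *
              FreeGroup.of (Sum.inl (mkPair i j h) : DIdx n) *
              FreeGroup.of (Sum.inr j : DIdx n) * FreeGroup.of (Sum.inr i : DIdx n) *
              (FreeGroup.of (Sum.inl (mkPair i j h) : DIdx n))⁻¹) ∨
       (∃ (i j k : Fin n) (h : i ≠ j), k ≠ i ∧ k ≠ j ∧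
          r = FreeGroup.of (Sum.inl (mkPair i j h) : DIdx n) *
              FreeGroup.of (Sum.inr k : DIdx n) *
              (FreeGroup.of (Sum.inl (mkPair i j h) : DIdx n))⁻¹ *
              (FreeGroup.of (Sum.inr k : DIdx n))⁻¹)}

/-- The group `G_{n,D}^2`. -/
abbrev GnD2 (n : ℕ) := PresentedGroup (gnD2Rels n)

/-- The generator `a_{ij}` of `G_{n,D}^2`. -/
def AD {n : ℕ} (i j : Fin n) (h : i ≠ j) : GnD2 n := PresentedGroup.of (Sum.inl (mkPair i j h))

/-- The generator `τ_i` of `G_{n,D}^2`. -/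
def T {n : ℕ} (i : Fin n) : GnD2 n := PresentedGroup.of (Sum.inr i)

lemma rel_eq_one {α : Type*} {rels : Set (FreeGroup α)} {r : FreeGroup α} (hr : r ∈ rels) :
    PresentedGroup.mk rels r = 1 := by
  have : r ∈ Subgroup.normalClosure rels := Subgroup.subset_normalClosure hr
  exact (QuotientGroup.eq_one_iff r).mpr this

/-- the map `ι : G_n^2 → G_{n,P}^2`, `a_{ij} ↦ a_{ij}^0`, is an injective
group homomorphism. -/
theorem stmt0 (n : ℕ) (hn : 2 < n) :
    ∃ ι : Gn2 n →* GnP2 n,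
      Function.Injective ι ∧ ∀ (i j : Fin n) (h : i ≠ j), ι (A2 i j h) = AP i j h 0 := by
  have hι : ∀ r ∈ gn2Rels n,
      FreeGroup.lift (fun p : PairIdx n => (PresentedGroup.of (p, (0 : ZMod 2)) : GnP2 n)) r = 1 := by
    rintro r (⟨i, j, h, rfl⟩ | ⟨i, j, k, l, hij, hkl, h1, h2, h3, h4, rfl⟩ |
        ⟨i, j, k, hij, hik, hjk, rfl⟩)
    · have := rel_eq_one (rels := gnP2Rels n) (Or.inl ⟨i, j, h, 0, rfl⟩)
      simpa [PresentedGroup.of, map_mul, map_inv] using this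
    · have := rel_eq_one (rels := gnP2Rels n)
        (Or.inr (Or.inl ⟨i, j, k, l, hij, hkl, 0, 0, h1, h2, h3, h4, rfl⟩))
      simpa [PresentedGroup.of, map_mul, map_inv] using this
    · have := rel_eq_one (rels := gnP2Rels n)
        (Or.inr (Or.inr ⟨i, j, k, hij, hik, hjk, 0, 0, 0, by norm_num, rfl⟩))
      simpa [PresentedGroup.of, map_mul, map_inv] using this
  have hπ : ∀ r ∈ gnP2Rels n,
      FreeGroup.lift (fun p : PairIdx n × ZMod 2 => (PresentedGroup.of p.1 : Gn2 n)) r = 1 := by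
    rintro r (⟨i, j, h, ε, rfl⟩ | ⟨i, j, k, l, hij, hkl, ε₁, ε₂, h1, h2, h3, h4, rfl⟩ |
        ⟨i, j, k, hij, hik, hjk, εij, εik, εjk, _, rfl⟩)
    · have := rel_eq_one (rels := gn2Rels n) (Or.inl ⟨i, j, h, rfl⟩)
      simpa [PresentedGroup.of, map_mul, map_inv] using this
    · have := rel_eq_one (rels := gn2Rels n)
        (Or.inr (Or.inl ⟨i, j, k, l, hij, hkl, h1, h2, h3, h4, rfl⟩))
      simpa [PresentedGroup.of, map_mul, map_inv] using this
    · have := rel_eq_one (rels := gn2Rels n)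
        (Or.inr (Or.inr ⟨i, j, k, hij, hik, hjk, rfl⟩))
      simpa [PresentedGroup.of, map_mul, map_inv] using this
  refine ⟨PresentedGroup.toGroup hι, ?_, ?_⟩
  · have hcomp : (PresentedGroup.toGroup hπ).comp (PresentedGroup.toGroup hι) =
        MonoidHom.id (Gn2 n) := by
      apply PresentedGroup.ext
      intro x
      simp [PresentedGroup.toGroup.of]
    intro a b hab
    have := congrArg (PresentedGroup.toGroup hπ) hab
    calc a = ((PresentedGroup.toGroup hπ).comp (PresentedGroup.toGroup hι)) a := by
            rw [hcomp]; rfl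
      _ = ((PresentedGroup.toGroup hπ).comp (PresentedGroup.toGroup hι)) b := this
      _ = b := by rw [hcomp]; rfl
  · intro i j h
    simp [A2, AP, PresentedGroup.toGroup.of]
end

section
/- The assignment η(a_{ij}^0) = a_{ij} and η(a_{ij}^1) = τ_i a_{ij} τ_i extends to a well-defined group homomorphism η : G_{n,P}^2 → G_{n,D}^2. -/
open scoped commutatorElement

section Stmt2Aux

variable {n : ℕ}

lemma presented_rel_one {α : Type*} {rels : Set (FreeGroup α)} {r : FreeGroup α} (h : r ∈ rels) :
    PresentedGroup.mk rels r = 1 :=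
  (QuotientGroup.eq_one_iff r).mpr (Subgroup.subset_normalClosure h)

lemma AD_sq (i j : Fin n) (h : i ≠ j) : AD i j h * AD i j h = 1 := by
  have := presented_rel_one (rels := gnD2Rels n) (Or.inl ⟨i, j, h, rfl⟩)
  simpa [AD, PresentedGroup.of, map_mul] using this

lemma T_sq (i : Fin n) : T i * T i = 1 := by
  have := presented_rel_one (rels := gnD2Rels n)
    (Or.inr (Or.inr (Or.inr (Or.inl ⟨i, rfl⟩))))
  simpa [T, PresentedGroup.of, map_mul] using this

lemma T_inv (i : Fin n) : (T i)⁻¹ = T i :=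
  inv_eq_of_mul_eq_one_right (T_sq i)

lemma T_commT (i j : Fin n) : Commute (T i) (T j) := by
  have := presented_rel_one (rels := gnD2Rels n)
    (Or.inr (Or.inr (Or.inr (Or.inr (Or.inl ⟨i, j, rfl⟩)))))
  have h2 : ⁅(T i : GnD2 n), T j⁆ = 1 := by
    simpa [T, PresentedGroup.of, commutatorElement_def, map_mul, map_inv] using this
  exact commutatorElement_eq_one_iff_mul_comm.mp h2

lemma AD_commAD (i j k l : Fin n) (hij : i ≠ j) (hkl : k ≠ l)
    (hik : i ≠ k) (hil : i ≠ l) (hjk : j ≠ k) (hjl : j ≠ l) :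
    Commute (AD i j hij) (AD k l hkl) := by
  have := presented_rel_one (rels := gnD2Rels n)
    (Or.inr (Or.inl ⟨i, j, k, l, hij, hkl, hik, hil, hjk, hjl, rfl⟩))
  have h2 : ⁅(AD i j hij : GnD2 n), AD k l hkl⁆ = 1 := by
    simpa [AD, PresentedGroup.of, commutatorElement_def, map_mul, map_inv] using this
  exact commutatorElement_eq_one_iff_mul_comm.mp h2

lemma T_commAD (k i j : Fin n) (h : i ≠ j) (hki : k ≠ i) (hkj : k ≠ j) :
    Commute (T k) (AD i j h) := by
  have := presented_rel_one (rels := gnD2Rels n)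
    (Or.inr (Or.inr (Or.inr (Or.inr (Or.inr (Or.inr ⟨i, j, k, h, hki, hkj, rfl⟩))))))
  have h2 : ⁅(AD i j h : GnD2 n), T k⁆ = 1 := by
    simpa [AD, T, PresentedGroup.of, commutatorElement_def, map_mul, map_inv] using this
  exact (commutatorElement_eq_one_iff_mul_comm.mp h2).symm

lemma AD_triple (i j k : Fin n) (hij : i ≠ j) (hik : i ≠ k) (hjk : j ≠ k) :
    AD i j hij * AD i k hik * AD j k hjk = AD j k hjk * AD i k hik * AD i j hij := by
  have := presented_rel_one (rels := gnD2Rels n)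
    (Or.inr (Or.inr (Or.inl ⟨i, j, k, hij, hik, hjk, rfl⟩)))
  have h2 : (AD i j hij * AD i k hik * AD j k hjk : GnD2 n) *
      (AD j k hjk * AD i k hik * AD i j hij)⁻¹ = 1 := by
    simpa [AD, PresentedGroup.of, map_mul, map_inv] using this
  exact mul_inv_eq_one.mp h2

lemma TTA (i j : Fin n) (h : i ≠ j) :
    T i * T j * AD i j h * T j * T i = AD i j h := by
  have := presented_rel_one (rels := gnD2Rels n)
    (Or.inr (Or.inr (Or.inr (Or.inr (Or.inr (Or.inl ⟨i, j, h, rfl⟩))))))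
  have h2 : (T i * T j * AD i j h * T j * T i : GnD2 n) * (AD i j h)⁻¹ = 1 := by
    simpa [AD, T, PresentedGroup.of, map_mul, map_inv] using this
  exact mul_inv_eq_one.mp h2

lemma conjT (w : Fin n) (x : GnD2 n) : MulAut.conj (T w) x = T w * x * T w := by
  rw [MulAut.conj_apply, T_inv]

lemma conjT_conjT (w : Fin n) (x : GnD2 n) :
    MulAut.conj (T w) (MulAut.conj (T w) x) = x := by
  rw [conjT, conjT, show T w * (T w * x * T w) * T w = (T w * T w) * x * (T w * T w) by group,
    T_sq, one_mul, mul_one]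

lemma conj_swap (i j : Fin n) (h : i ≠ j) :
    T j * AD i j h * T j = T i * AD i j h * T i := by
  have h2 : MulAut.conj (T i) (MulAut.conj (T j) (AD i j h)) = AD i j h := by
    rw [conjT, conjT]
    simpa [mul_assoc] using TTA i j h
  have h3 := congrArg (MulAut.conj (T i)) h2
  rw [conjT_conjT] at h3
  rw [← conjT, ← conjT, h3]

lemma conj_fix (w i j : Fin n) (h : i ≠ j) (hwi : w ≠ i) (hwj : w ≠ j) :
    MulAut.conj (T w) (AD i j h) = AD i j h := by
  have hc := T_commAD w i j h hwi hwj
  rw [conjT]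
  calc T w * AD i j h * T w = AD i j h * T w * T w := by rw [hc.eq]
    _ = AD i j h * (T w * T w) := by rw [mul_assoc]
    _ = AD i j h := by rw [T_sq, mul_one]

lemma zmod2_cases : ∀ ε : ZMod 2, ε = 0 ∨ ε = 1 := by decide

/-- A choice of an element of the pair. -/
def pick (s : PairIdx n) : Fin n :=
  s.1.min' (Finset.card_pos.mp (by rw [s.2]; norm_num))

lemma pick_mem (s : PairIdx n) : pick s ∈ s.1 := Finset.min'_mem _ _

/-- The map on generators. -/
def fGen (x : PairIdx n × ZMod 2) : GnD2 n :=
  if x.2 = 0 then PresentedGroup.of (Sum.inl x.1)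
  else T (pick x.1) * PresentedGroup.of (Sum.inl x.1) * T (pick x.1)

lemma fGen_zero (i j : Fin n) (h : i ≠ j) : fGen (mkPair i j h, (0 : ZMod 2)) = AD i j h := rfl

lemma fGen_one (i j : Fin n) (h : i ≠ j) :
    fGen (mkPair i j h, (1 : ZMod 2)) = T i * AD i j h * T i := by
  have hne : (1 : ZMod 2) ≠ 0 := by decide
  have hm : pick (mkPair i j h) ∈ ({i, j} : Finset (Fin n)) := pick_mem (mkPair i j h)
  rw [Finset.mem_insert, Finset.mem_singleton] at hm
  have : fGen (mkPair i j h, (1 : ZMod 2)) =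
      T (pick (mkPair i j h)) * AD i j h * T (pick (mkPair i j h)) := by
    simp [fGen, hne, AD]
  rw [this]
  rcases hm with hm | hm
  · rw [hm]
  · rw [hm]; exact conj_swap i j h

lemma fGen_one' (i j : Fin n) (h : i ≠ j) :
    fGen (mkPair i j h, (1 : ZMod 2)) = T j * AD i j h * T j := by
  rw [fGen_one, conj_swap]

lemma fGen_conj (i j : Fin n) (h : i ≠ j) (ε : ZMod 2) (w : Fin n)
    (hw : (ε = 0 ∧ w ≠ i ∧ w ≠ j) ∨ (ε = 1 ∧ (w = i ∨ w = j))) :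
    fGen (mkPair i j h, ε) = MulAut.conj (T w) (AD i j h) := by
  rcases hw with ⟨hε, hwi, hwj⟩ | ⟨hε, hw⟩
  · rw [hε, fGen_zero, conj_fix w i j h hwi hwj]
  · rcases hw with rfl | rfl
    · rw [hε, fGen_one, conjT]
    · rw [hε, fGen_one', conjT]

lemma fGen_sq (i j : Fin n) (h : i ≠ j) (ε : ZMod 2) :
    fGen (mkPair i j h, ε) * fGen (mkPair i j h, ε) = 1 := by
  rcases (zmod2_cases ε) with rfl | rfl
  · rw [fGen_zero]; exact AD_sq i j h
  · rw [fGen_one, ← conjT, ← map_mul, AD_sq, map_one]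

lemma fGen_commute (i j k l : Fin n) (hij : i ≠ j) (hkl : k ≠ l)
    (hik : i ≠ k) (hil : i ≠ l) (hjk : j ≠ k) (hjl : j ≠ l) (ε₁ ε₂ : ZMod 2) :
    Commute (fGen (mkPair i j hij, ε₁)) (fGen (mkPair k l hkl, ε₂)) := by
  have cAA := AD_commAD i j k l hij hkl hik hil hjk hjl
  have cTi : Commute (T i) (AD k l hkl) := T_commAD i k l hkl hik hil
  have cTk : Commute (T k) (AD i j hij) := T_commAD k i j hij hik.symm hjk.symm
  have cTT : Commute (T i) (T k) := T_commT i k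
  have h1 : Commute (AD i j hij) (fGen (mkPair k l hkl, ε₂)) := by
    rcases (zmod2_cases ε₂) with rfl | rfl
    · rw [fGen_zero]; exact cAA
    · rw [fGen_one]
      exact ((cTk.symm.mul_right cAA).mul_right cTk.symm)
  have h2 : Commute (T i) (fGen (mkPair k l hkl, ε₂)) := by
    rcases (zmod2_cases ε₂) with rfl | rfl
    · rw [fGen_zero]; exact cTi
    · rw [fGen_one]
      exact ((cTT.mul_right cTi).mul_right cTT)
  rcases (zmod2_cases ε₁) with rfl | rfl
  · rw [fGen_zero]; exact h1
  · rw [fGen_one]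
    exact (h2.mul_left h1).mul_left h2

end Stmt2Aux

/-- `η(a_{ij}^0) = a_{ij}`, `η(a_{ij}^1) = τ_i a_{ij} τ_i` extends to a
well-defined homomorphism `η : G_{n,P}^2 → G_{n,D}^2`. -/
theorem stmt2 (n : ℕ) (hn : 2 < n) :
    ∃ η : GnP2 n →* GnD2 n,
      ∀ (i j : Fin n) (h : i < j),
        η (AP i j h.ne 0) = AD i j h.ne ∧
        η (AP i j h.ne 1) = T i * AD i j h.ne * T i := by
  have hrels : ∀ r ∈ gnP2Rels n, FreeGroup.lift fGen r = 1 := by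
    intro r hr
    rcases hr with ⟨i, j, h, ε, rfl⟩ | ⟨i, j, k, l, hij, hkl, ε₁, ε₂, hik, hil, hjk, hjl, rfl⟩ |
      ⟨i, j, k, hij, hik, hjk, εij, εik, εjk, hsum, rfl⟩
    · simp only [map_mul, FreeGroup.lift_apply_of]
      exact fGen_sq i j h ε
    · simp only [map_mul, map_inv, FreeGroup.lift_apply_of]
      have hc := fGen_commute i j k l hij hkl hik hil hjk hjl ε₁ ε₂
      have h1 : ⁅fGen (mkPair i j hij, ε₁), fGen (mkPair k l hkl, ε₂)⁆ = 1 :=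
        commutatorElement_eq_one_iff_mul_comm.mpr hc
      simpa [commutatorElement_def] using h1
    · simp only [map_mul, map_inv, FreeGroup.lift_apply_of]
      have key : (AD i j hij * AD i k hik * AD j k hjk : GnD2 n) *
          (AD j k hjk * AD i k hik * AD i j hij)⁻¹ = 1 :=
        mul_inv_eq_one.mpr (AD_triple i j k hij hik hjk)
      rcases zmod2_cases εij with h1 | h1 <;> rcases zmod2_cases εik with h2 | h2 <;>
        rcases zmod2_cases εjk with h3 | h3
      · -- (0,0,0)
        rw [h1, h2, h3, fGen_zero, fGen_zero, fGen_zero]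
        exact key
      · rw [h1, h2, h3] at hsum; exact absurd hsum (by decide)
      · rw [h1, h2, h3] at hsum; exact absurd hsum (by decide)
      · -- (0,1,1), conjugate by k
        have e1 := fGen_conj i j hij εij k (Or.inl ⟨h1, hik.symm, hjk.symm⟩)
        have e2 := fGen_conj i k hik εik k (Or.inr ⟨h2, Or.inr rfl⟩)
        have e3 := fGen_conj j k hjk εjk k (Or.inr ⟨h3, Or.inr rfl⟩)
        rw [e1, e2, e3]
        simp only [← map_mul, ← map_inv]
        rw [key, map_one]
      · rw [h1, h2, h3] at hsum; exact absurd hsum (by decide)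
      · -- (1,0,1), conjugate by j
        have e1 := fGen_conj i j hij εij j (Or.inr ⟨h1, Or.inr rfl⟩)
        have e2 := fGen_conj i k hik εik j (Or.inl ⟨h2, hij.symm, hjk⟩)
        have e3 := fGen_conj j k hjk εjk j (Or.inr ⟨h3, Or.inl rfl⟩)
        rw [e1, e2, e3]
        simp only [← map_mul, ← map_inv]
        rw [key, map_one]
      · -- (1,1,0), conjugate by i
        have e1 := fGen_conj i j hij εij i (Or.inr ⟨h1, Or.inl rfl⟩)
        have e2 := fGen_conj i k hik εik i (Or.inr ⟨h2, Or.inl rfl⟩)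
        have e3 := fGen_conj j k hjk εjk i (Or.inl ⟨h3, hij, hik⟩)
        rw [e1, e2, e3]
        simp only [← map_mul, ← map_inv]
        rw [key, map_one]
      · rw [h1, h2, h3] at hsum; exact absurd hsum (by decide)
  refine ⟨PresentedGroup.toGroup hrels, fun i j h => ⟨?_, ?_⟩⟩
  · show PresentedGroup.toGroup hrels (PresentedGroup.of (mkPair i j h.ne, 0)) = _
    rw [PresentedGroup.toGroup.of]
    exact fGen_zero i j h.ne
  · show PresentedGroup.toGroup hrels (PresentedGroup.of (mkPair i j h.ne, 1)) = _
    rw [PresentedGroup.toGroup.of]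
    exact fGen_one i j h.ne
end

section
/- χ ∘ η is the identity homomorphism on G_{n,P}^2, where η : G_{n,P}^2 → H_{n,D}^2 ⊂ G_{n,D}^2 sends a_{ij}^0 ↦ a_{ij}, a_{ij}^1 ↦ τ_i a_{ij} τ_i, and χ : H_{n,D}^2 → G_{n,P}^2 assigns to each crossing generator a_{ij} the parity equal to the number mod 2 of preceding τ_i's plus preceding τ_j's. -/
/-- The number of occurrences of `τ_i` (with either sign) in a word over the alphabet of
`G_{n,D}^2`. -/
def tauCount {n : ℕ} (i : Fin n) (L : List (DIdx n × Bool)) : ℕ :=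
  L.countP (fun p => p.1 = Sum.inr i)

/-- The image of a word in `G_{n,D}^2`. -/
def mkD (n : ℕ) (L : List (DIdx n × Bool)) : GnD2 n :=
  PresentedGroup.mk (gnD2Rels n) (FreeGroup.mk L)

/-- The word-level map `χ`: reading a word over the alphabet of `G_{n,D}^2` from left to
right (and keeping, for each strand `i`, the running parity `N i` of the number of `τ_i`'s
seen so far), each crossing letter `a_{ij}` is sent to `a_{ij}^{N i + N j}` in `G_{n,P}^2`
and the `τ`'s are dropped. -/
def chiWord (n : ℕ) : List (DIdx n × Bool) → (Fin n → ZMod 2) → GnP2 n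
  | [], _ => 1
  | (Sum.inl s, _) :: L, N =>
      PresentedGroup.of (s, ∑ x ∈ s.1, N x) * chiWord n L N
  | (Sum.inr i, _) :: L, N =>
      chiWord n L (Function.update N i (N i + 1))

namespace Stmt8

/-- Relations map to 1 in the presented group. -/
lemma relOne {α : Type*} {rels : Set (FreeGroup α)} {r : FreeGroup α} (h : r ∈ rels) :
    PresentedGroup.mk rels r = 1 :=
  (QuotientGroup.eq_one_iff r).mpr (Subgroup.subset_normalClosure h)

section helpers
variable {G : Type*} [Group G] {t : G}

lemma tt_cancel (ht : t * t = 1) (w : G) : t * (t * w) = w := by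
  rw [← mul_assoc, ht, one_mul]

lemma h_sq {a : G} (ht : t * t = 1) (ha : a * a = 1) : (t * a * t) * (t * a * t) = 1 := by
  calc (t * a * t) * (t * a * t) = t * (a * (t * (t * (a * t)))) := by
        simp only [mul_assoc]
    _ = t * (a * (a * t)) := by rw [tt_cancel ht]
    _ = t * t := by rw [← mul_assoc a a t, ha, one_mul]
    _ = 1 := ht

lemma h_tripleA {x y z : G} (ht : t * t = 1) (hz : Commute t z) :
    (t * x * t) * (t * y * t) * z = t * (x * y * z) * t := by
  have hz' : t * z = z * t := hz.eq
  calc (t * x * t) * (t * y * t) * z = t * (x * (t * (t * (y * (t * z))))) := by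
        simp only [mul_assoc]
    _ = t * (x * (y * (t * z))) := by rw [tt_cancel ht]
    _ = t * (x * (y * (z * t))) := by rw [hz']
    _ = t * (x * y * z) * t := by simp only [mul_assoc]

lemma h_tripleB {x y z : G} (ht : t * t = 1) (hy : Commute t y) :
    (t * x * t) * y * (t * z * t) = t * (x * y * z) * t := by
  have hy' : t * y = y * t := hy.eq
  calc (t * x * t) * y * (t * z * t) = t * (x * (t * (y * (t * (z * t))))) := by
        simp only [mul_assoc]
    _ = t * (x * (y * (t * (t * (z * t))))) := by rw [← mul_assoc t y, hy', mul_assoc]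
    _ = t * (x * (y * (z * t))) := by rw [tt_cancel ht]
    _ = t * (x * y * z) * t := by simp only [mul_assoc]

lemma h_tripleC {x y z : G} (ht : t * t = 1) (hx : Commute t x) :
    x * (t * y * t) * (t * z * t) = t * (x * y * z) * t := by
  have hx' : x * t = t * x := hx.eq.symm
  calc x * (t * y * t) * (t * z * t) = x * (t * (y * (t * (t * (z * t))))) := by
        simp only [mul_assoc]
    _ = x * (t * (y * (z * t))) := by rw [tt_cancel ht]
    _ = t * (x * (y * (z * t))) := by rw [← mul_assoc x t, hx', mul_assoc]
    _ = t * (x * y * z) * t := by simp only [mul_assoc]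

lemma comm_of_rel {a b : G} (h : a * b * a⁻¹ * b⁻¹ = 1) : Commute a b := by
  have : a * b = b * a := by
    calc a * b = (a * b * a⁻¹ * b⁻¹) * (b * a) := by group
      _ = b * a := by rw [h, one_mul]
  exact this

end helpers

variable {n : ℕ}

lemma zmod2_cases (ε : ZMod 2) : ε = 0 ∨ ε = 1 := by revert ε; decide

lemma zmod2_add_self (a : ZMod 2) : a + a = 0 := by revert a; decide

/-! ### Relation lemmas in `GnD2` -/

lemma AD_sq (i j : Fin n) (h : i ≠ j) : AD i j h * AD i j h = 1 := by
  have := relOne (rels := gnD2Rels n) (r :=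
    FreeGroup.of (Sum.inl (mkPair i j h) : DIdx n) *
    FreeGroup.of (Sum.inl (mkPair i j h) : DIdx n)) (Or.inl ⟨i, j, h, rfl⟩)
  simpa [AD, PresentedGroup.of, map_mul] using this

lemma T_sq (i : Fin n) : T i * T i = 1 := by
  have := relOne (rels := gnD2Rels n) (r :=
    FreeGroup.of (Sum.inr i : DIdx n) * FreeGroup.of (Sum.inr i : DIdx n))
    (Or.inr (Or.inr (Or.inr (Or.inl ⟨i, rfl⟩))))
  simpa [T, PresentedGroup.of, map_mul] using this

lemma T_commute (i j : Fin n) : Commute (T i) (T j) := by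
  apply comm_of_rel
  have := relOne (rels := gnD2Rels n) (r :=
    FreeGroup.of (Sum.inr i : DIdx n) * FreeGroup.of (Sum.inr j : DIdx n) *
    (FreeGroup.of (Sum.inr i : DIdx n))⁻¹ * (FreeGroup.of (Sum.inr j : DIdx n))⁻¹)
    (Or.inr (Or.inr (Or.inr (Or.inr (Or.inl ⟨i, j, rfl⟩)))))
  simpa [T, PresentedGroup.of, map_mul, map_inv] using this

lemma AD_commute_far (i j k l : Fin n) (hij : i ≠ j) (hkl : k ≠ l)
    (h1 : i ≠ k) (h2 : i ≠ l) (h3 : j ≠ k) (h4 : j ≠ l) :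
    Commute (AD i j hij) (AD k l hkl) := by
  apply comm_of_rel
  have := relOne (rels := gnD2Rels n) (r :=
    FreeGroup.of (Sum.inl (mkPair i j hij) : DIdx n) *
    FreeGroup.of (Sum.inl (mkPair k l hkl) : DIdx n) *
    (FreeGroup.of (Sum.inl (mkPair i j hij) : DIdx n))⁻¹ *
    (FreeGroup.of (Sum.inl (mkPair k l hkl) : DIdx n))⁻¹)
    (Or.inr (Or.inl ⟨i, j, k, l, hij, hkl, h1, h2, h3, h4, rfl⟩))
  simpa [AD, PresentedGroup.of, map_mul, map_inv] using this

lemma AD_triple (i j k : Fin n) (hij : i ≠ j) (hik : i ≠ k) (hjk : j ≠ k) :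
    AD i j hij * AD i k hik * AD j k hjk = AD j k hjk * AD i k hik * AD i j hij := by
  have := relOne (rels := gnD2Rels n) (r :=
    FreeGroup.of (Sum.inl (mkPair i j hij) : DIdx n) *
    FreeGroup.of (Sum.inl (mkPair i k hik) : DIdx n) *
    FreeGroup.of (Sum.inl (mkPair j k hjk) : DIdx n) *
    (FreeGroup.of (Sum.inl (mkPair j k hjk) : DIdx n) *
     FreeGroup.of (Sum.inl (mkPair i k hik) : DIdx n) *
     FreeGroup.of (Sum.inl (mkPair i j hij) : DIdx n))⁻¹)
    (Or.inr (Or.inr (Or.inl ⟨i, j, k, hij, hik, hjk, rfl⟩)))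
  rw [map_mul, map_inv, mul_inv_eq_one] at this
  simpa [AD, PresentedGroup.of, map_mul] using this

lemma TA_rel (i j : Fin n) (h : i ≠ j) :
    T i * T j * AD i j h * T j * T i = AD i j h := by
  have := relOne (rels := gnD2Rels n) (r :=
    FreeGroup.of (Sum.inr i : DIdx n) * FreeGroup.of (Sum.inr j : DIdx n) *
    FreeGroup.of (Sum.inl (mkPair i j h) : DIdx n) *
    FreeGroup.of (Sum.inr j : DIdx n) * FreeGroup.of (Sum.inr i : DIdx n) *
    (FreeGroup.of (Sum.inl (mkPair i j h) : DIdx n))⁻¹)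
    (Or.inr (Or.inr (Or.inr (Or.inr (Or.inr (Or.inl ⟨i, j, h, rfl⟩))))))
  rw [map_mul, map_inv, mul_inv_eq_one] at this
  simpa [AD, T, PresentedGroup.of, map_mul] using this

lemma T_AD_commute (k i j : Fin n) (h : i ≠ j) (hk1 : k ≠ i) (hk2 : k ≠ j) :
    Commute (T k) (AD i j h) := by
  apply Commute.symm
  apply comm_of_rel
  have := relOne (rels := gnD2Rels n) (r :=
    FreeGroup.of (Sum.inl (mkPair i j h) : DIdx n) *
    FreeGroup.of (Sum.inr k : DIdx n) *
    (FreeGroup.of (Sum.inl (mkPair i j h) : DIdx n))⁻¹ *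
    (FreeGroup.of (Sum.inr k : DIdx n))⁻¹)
    (Or.inr (Or.inr (Or.inr (Or.inr (Or.inr (Or.inr ⟨i, j, k, h, hk1, hk2, rfl⟩))))))
  simpa [AD, T, PresentedGroup.of, map_mul, map_inv] using this

lemma conj_eq (i j : Fin n) (h : i ≠ j) :
    T i * AD i j h * T i = T j * AD i j h * T j := by
  have h6 := TA_rel i j h
  calc T i * AD i j h * T i
      = T i * (T i * T j * AD i j h * T j * T i) * T i := by rw [h6]
    _ = (T i * T i) * (T j * AD i j h * T j) * (T i * T i) := by
        simp only [mul_assoc]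
    _ = T j * AD i j h * T j := by rw [T_sq]; simp

/-! ### Relation lemmas in `GnP2` -/

lemma AP_sq (i j : Fin n) (h : i ≠ j) (ε : ZMod 2) :
    AP i j h ε * AP i j h ε = 1 := by
  have := relOne (rels := gnP2Rels n) (r :=
    FreeGroup.of (mkPair i j h, ε) * FreeGroup.of (mkPair i j h, ε))
    (Or.inl ⟨i, j, h, ε, rfl⟩)
  simpa [AP, PresentedGroup.of, map_mul] using this

lemma pair_repr (s : PairIdx n) : ∃ (i j : Fin n) (hij : i ≠ j), s = mkPair i j hij := by
  obtain ⟨i, j, hij, hs⟩ := Finset.card_eq_two.mp s.2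
  exact ⟨i, j, hij, Subtype.ext hs⟩

lemma APs_sq (s : PairIdx n) (ε : ZMod 2) :
    (PresentedGroup.of (s, ε) : GnP2 n) * PresentedGroup.of (s, ε) = 1 := by
  obtain ⟨i, j, hij, rfl⟩ := pair_repr s
  exact AP_sq i j hij ε

lemma APs_inv (s : PairIdx n) (ε : ZMod 2) :
    (PresentedGroup.of (s, ε) : GnP2 n)⁻¹ = PresentedGroup.of (s, ε) :=
  inv_eq_of_mul_eq_one_right (APs_sq s ε)

lemma AP_commute_far (i j k l : Fin n) (hij : i ≠ j) (hkl : k ≠ l)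
    (h1 : i ≠ k) (h2 : i ≠ l) (h3 : j ≠ k) (h4 : j ≠ l) (ε₁ ε₂ : ZMod 2) :
    Commute (AP i j hij ε₁) (AP k l hkl ε₂) := by
  apply comm_of_rel
  have := relOne (rels := gnP2Rels n) (r :=
    FreeGroup.of (mkPair i j hij, ε₁) * FreeGroup.of (mkPair k l hkl, ε₂) *
    (FreeGroup.of (mkPair i j hij, ε₁))⁻¹ * (FreeGroup.of (mkPair k l hkl, ε₂))⁻¹)
    (Or.inr (Or.inl ⟨i, j, k, l, hij, hkl, ε₁, ε₂, h1, h2, h3, h4, rfl⟩))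
  simpa [AP, PresentedGroup.of, map_mul, map_inv] using this

lemma AP_triple (i j k : Fin n) (hij : i ≠ j) (hik : i ≠ k) (hjk : j ≠ k)
    (εij εik εjk : ZMod 2) (hsum : εij + εik + εjk = 0) :
    AP i j hij εij * AP i k hik εik * AP j k hjk εjk =
      AP j k hjk εjk * AP i k hik εik * AP i j hij εij := by
  have := relOne (rels := gnP2Rels n) (r :=
    FreeGroup.of (mkPair i j hij, εij) * FreeGroup.of (mkPair i k hik, εik) *
    FreeGroup.of (mkPair j k hjk, εjk) *
    (FreeGroup.of (mkPair j k hjk, εjk) * FreeGroup.of (mkPair i k hik, εik) *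
     FreeGroup.of (mkPair i j hij, εij))⁻¹)
    (Or.inr (Or.inr ⟨i, j, k, hij, hik, hjk, εij, εik, εjk, hsum, rfl⟩))
  rw [map_mul, map_inv, mul_inv_eq_one] at this
  simpa [AP, PresentedGroup.of, map_mul] using this

/-! ### The map `η` -/

lemma mem_mkPair {i j k : Fin n} {h : i ≠ j} :
    k ∈ (mkPair i j h).1 ↔ k = i ∨ k = j := by
  simp [mkPair]

/-- The minimum element of a pair. -/
def minElt (s : PairIdx n) : Fin n :=
  s.1.min' (Finset.card_pos.mp (by rw [s.2]; norm_num))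

lemma minElt_mem (s : PairIdx n) : minElt s ∈ s.1 := Finset.min'_mem _ _

/-- `a_s` in `GnD2`. -/
def ofD (s : PairIdx n) : GnD2 n := PresentedGroup.of (Sum.inl s)

lemma ofD_mkPair (i j : Fin n) (h : i ≠ j) : ofD (mkPair i j h) = AD i j h := rfl

/-- `τ_{min s}` in `GnD2`. -/
def tD (s : PairIdx n) : GnD2 n := T (minElt s)

/-- The map on generators defining `η`. -/
def etaF : PairIdx n × ZMod 2 → GnD2 n :=
  fun p => tD p.1 ^ p.2.val * ofD p.1 * tD p.1 ^ p.2.val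

lemma etaF_zero (s : PairIdx n) : etaF (s, 0) = ofD s := by
  simp [etaF, ZMod.val_zero]

lemma etaF_one (i j : Fin n) (h : i ≠ j) :
    etaF (mkPair i j h, 1) = T i * AD i j h * T i := by
  have hv : (1 : ZMod 2).val = 1 := rfl
  have hm : minElt (mkPair i j h) = i ∨ minElt (mkPair i j h) = j :=
    mem_mkPair.mp (minElt_mem _)
  rcases hm with hm | hm
  · simp [etaF, tD, hv, hm, ofD_mkPair]
  · rw [etaF]
    simp only [hv, pow_one, tD, hm, ofD_mkPair]
    exact (conj_eq i j h).symm

lemma etaF_one' (i j : Fin n) (h : i ≠ j) :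
    etaF (mkPair i j h, 1) = T j * AD i j h * T j := by
  rw [etaF_one, conj_eq]

lemma etaF_commute (i j k l : Fin n) (hij : i ≠ j) (hkl : k ≠ l)
    (h1 : i ≠ k) (h2 : i ≠ l) (h3 : j ≠ k) (h4 : j ≠ l) (ε₁ ε₂ : ZMod 2) :
    Commute (etaF (mkPair i j hij, ε₁)) (etaF (mkPair k l hkl, ε₂)) := by
  have hm1 : minElt (mkPair i j hij) = i ∨ minElt (mkPair i j hij) = j :=
    mem_mkPair.mp (minElt_mem _)
  have hm2 : minElt (mkPair k l hkl) = k ∨ minElt (mkPair k l hkl) = l :=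
    mem_mkPair.mp (minElt_mem _)
  have c1 : Commute (ofD (mkPair i j hij)) (ofD (mkPair k l hkl)) :=
    AD_commute_far i j k l hij hkl h1 h2 h3 h4
  have c2 : Commute (tD (mkPair i j hij)) (ofD (mkPair k l hkl)) := by
    rcases hm1 with hm | hm <;> rw [tD, hm, ofD_mkPair]
    · exact T_AD_commute i k l hkl h1 h2
    · exact T_AD_commute j k l hkl h3 h4
  have c3 : Commute (ofD (mkPair i j hij)) (tD (mkPair k l hkl)) := by
    rcases hm2 with hm | hm <;> rw [tD, hm, ofD_mkPair]
    · exact (T_AD_commute k i j hij h1.symm h3.symm).symm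
    · exact (T_AD_commute l i j hij h2.symm h4.symm).symm
  have c4 : Commute (tD (mkPair i j hij)) (tD (mkPair k l hkl)) := T_commute _ _
  have hTa : Commute (tD (mkPair i j hij)) (etaF (mkPair k l hkl, ε₂)) :=
    ((c4.pow_right _).mul_right c2).mul_right (c4.pow_right _)
  have hAa : Commute (ofD (mkPair i j hij)) (etaF (mkPair k l hkl, ε₂)) :=
    ((c3.pow_right _).mul_right c1).mul_right (c3.pow_right _)
  exact ((hTa.pow_left _).mul_left hAa).mul_left (hTa.pow_left _)

lemma etaRels : ∀ r ∈ gnP2Rels n, FreeGroup.lift etaF r = 1 := by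
  intro r hr
  rcases hr with ⟨i, j, h, ε, rfl⟩ | ⟨i, j, k, l, hij, hkl, ε₁, ε₂, h1, h2, h3, h4, rfl⟩ |
    ⟨i, j, k, hij, hik, hjk, εij, εik, εjk, hsum, rfl⟩
  · rw [map_mul, FreeGroup.lift_apply_of]
    rcases zmod2_cases ε with rfl | rfl
    · rw [etaF_zero, ofD_mkPair]; exact AD_sq i j h
    · rw [etaF_one]
      exact h_sq (T_sq i) (AD_sq i j h)
  · have c := etaF_commute i j k l hij hkl h1 h2 h3 h4 ε₁ ε₂
    simp only [map_mul, map_inv, FreeGroup.lift_apply_of]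
    have := commutatorElement_eq_one_iff_commute.mpr c
    simpa [commutatorElement_def] using this
  · simp only [map_mul, map_inv, FreeGroup.lift_apply_of, mul_inv_eq_one]
    have hc_jk_i : Commute (T i) (AD j k hjk) := T_AD_commute i j k hjk hij hik
    have hc_ik_j : Commute (T j) (AD i k hik) := T_AD_commute j i k hik hij.symm hjk
    have hc_ij_k : Commute (T k) (AD i j hij) := T_AD_commute k i j hij hik.symm hjk.symm
    rcases zmod2_cases εij with rfl | rfl <;> rcases zmod2_cases εik with rfl | rfl <;>
      rcases zmod2_cases εjk with rfl | rfl
    · rw [etaF_zero, etaF_zero, etaF_zero, ofD_mkPair, ofD_mkPair, ofD_mkPair]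
      exact AD_triple i j k hij hik hjk
    · exact absurd hsum (by decide)
    · exact absurd hsum (by decide)
    · -- (0,1,1): common strand k
      rw [etaF_zero, etaF_one' i k hik, etaF_one' j k hjk, ofD_mkPair]
      rw [h_tripleC (T_sq k) hc_ij_k, h_tripleA (T_sq k) hc_ij_k]
      rw [AD_triple i j k hij hik hjk]
    · exact absurd hsum (by decide)
    · -- (1,0,1): common strand j
      rw [etaF_one' i j hij, etaF_one j k hjk, etaF_zero, ofD_mkPair]
      rw [h_tripleB (T_sq j) hc_ik_j, h_tripleB (T_sq j) hc_ik_j]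
      rw [AD_triple i j k hij hik hjk]
    · -- (1,1,0): common strand i
      rw [etaF_one i j hij, etaF_one i k hik, etaF_zero, ofD_mkPair]
      rw [h_tripleA (T_sq i) hc_jk_i, h_tripleC (T_sq i) hc_jk_i]
      rw [AD_triple i j k hij hik hjk]
    · exact absurd hsum (by decide)

/-- The homomorphism `η : GnP2 n →* GnD2 n`. -/
def eta : GnP2 n →* GnD2 n := PresentedGroup.toGroup (etaRels (n := n))

lemma eta_of (s : PairIdx n) (ε : ZMod 2) :
    eta (PresentedGroup.of (s, ε)) = etaF (s, ε) :=
  PresentedGroup.toGroup.of _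

/-! ### The state group `W` and the homomorphism `Ψ` -/

/-- States. -/
abbrev St (n : ℕ) := Fin n → ZMod 2

lemma St_add_self (v : St n) : v + v = 0 := by
  funext x
  exact zmod2_add_self (v x)

lemma St_neg (v : St n) : -v = v := by
  rw [neg_eq_iff_add_eq_zero, St_add_self]

/-- The function group. -/
abbrev PiG (n : ℕ) := St n → GnP2 n

/-- Shift automorphism. -/
def shiftAut (v : St n) : MulAut (PiG n) where
  toFun f := fun N => f (N + v)
  invFun f := fun N => f (N + v)
  left_inv f := by
    funext N
    show f (N + v + v) = f N
    rw [add_assoc, St_add_self, add_zero]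
  right_inv f := by
    funext N
    show f (N + v + v) = f N
    rw [add_assoc, St_add_self, add_zero]
  map_mul' f g := rfl

@[simp] lemma shiftAut_apply (v : St n) (f : PiG n) (N : St n) :
    shiftAut v f N = f (N + v) := rfl

/-- The translation action. -/
def shiftHom : Multiplicative (St n) →* MulAut (PiG n) where
  toFun v := shiftAut v.toAdd
  map_one' := by
    refine MulEquiv.ext fun f => funext fun N => ?_
    simp
  map_mul' v w := by
    refine MulEquiv.ext fun f => funext fun N => ?_
    simp [MulAut.mul_apply, add_assoc]

@[simp] lemma shiftHom_apply (v : Multiplicative (St n)) (f : PiG n) (N : St n) :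
    shiftHom v f N = f (N + v.toAdd) := rfl

/-- The wreath-type group. -/
abbrev W (n : ℕ) := SemidirectProduct (PiG n) (Multiplicative (St n)) shiftHom

/-- Map on generators defining `Ψ : GnD2 n →* W n`. -/
def psiF : DIdx n → W n
  | Sum.inl s => ⟨fun N => PresentedGroup.of (s, ∑ x ∈ s.1, N x), 1⟩
  | Sum.inr i => ⟨1, Multiplicative.ofAdd (Pi.single i 1)⟩

@[simp] lemma psiF_inl_left (s : PairIdx n) :
    (psiF (Sum.inl s) : W n).left = fun N => PresentedGroup.of (s, ∑ x ∈ s.1, N x) := rfl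

@[simp] lemma psiF_inl_right (s : PairIdx n) : (psiF (Sum.inl s) : W n).right = 1 := rfl

@[simp] lemma psiF_inr_left (i : Fin n) : (psiF (Sum.inr i) : W n).left = 1 := rfl

@[simp] lemma psiF_inr_right (i : Fin n) :
    (psiF (Sum.inr i) : W n).right = Multiplicative.ofAdd (Pi.single i 1) := rfl

lemma one_one_zmod2 : (1 : ZMod 2) + 1 = 0 := by decide

lemma sum_add (s : PairIdx n) (N v : St n) :
    (∑ x ∈ s.1, (N + v) x) = (∑ x ∈ s.1, N x) + ∑ x ∈ s.1, v x := by
  simpa [Pi.add_apply] using Finset.sum_add_distrib (s := s.1) (f := N) (g := v)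

lemma sum_single_pair (s : PairIdx n) (m : Fin n) :
    (∑ x ∈ s.1, (Pi.single m (1 : ZMod 2)) x) = if m ∈ s.1 then 1 else 0 := by
  simp [Pi.single_apply, Finset.sum_ite_eq' s.1 m fun _ => (1 : ZMod 2)]

lemma psiRels : ∀ r ∈ gnD2Rels n, FreeGroup.lift psiF r = 1 := by
  intro r hr
  rcases hr with ⟨i, j, h, rfl⟩ | ⟨i, j, k, l, hij, hkl, h1, h2, h3, h4, rfl⟩ |
    ⟨i, j, k, hij, hik, hjk, rfl⟩ | ⟨i, rfl⟩ | ⟨i, j, rfl⟩ | ⟨i, j, h, rfl⟩ |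
    ⟨i, j, k, h, hk1, hk2, rfl⟩
  · -- a² = 1
    simp only [map_mul, FreeGroup.lift_apply_of]
    refine SemidirectProduct.ext ?_ ?_
    · funext N
      simp only [SemidirectProduct.mul_left, SemidirectProduct.mul_right, SemidirectProduct.one_left, SemidirectProduct.one_right, psiF_inl_left, psiF_inl_right, psiF_inr_left, psiF_inr_right, map_one, MulAut.one_apply, mul_one, one_mul, Pi.mul_apply, Pi.one_apply, shiftHom_apply, toAdd_ofAdd, toAdd_mul]
      exact APs_sq _ _
    · simp only [SemidirectProduct.mul_left, SemidirectProduct.mul_right, SemidirectProduct.one_left, SemidirectProduct.one_right, psiF_inl_left, psiF_inl_right, psiF_inr_left, psiF_inr_right, map_one, MulAut.one_apply, mul_one, one_mul, Pi.mul_apply, Pi.one_apply, shiftHom_apply, toAdd_ofAdd, toAdd_mul]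
  · -- far commutation of a's
    have key : Commute (psiF (Sum.inl (mkPair i j hij)) : W n)
        (psiF (Sum.inl (mkPair k l hkl))) := by
      refine SemidirectProduct.ext ?_ ?_
      · funext N
        simp only [SemidirectProduct.mul_left, SemidirectProduct.mul_right, SemidirectProduct.one_left, SemidirectProduct.one_right, psiF_inl_left, psiF_inl_right, psiF_inr_left, psiF_inr_right, map_one, MulAut.one_apply, mul_one, one_mul, Pi.mul_apply, Pi.one_apply, shiftHom_apply, toAdd_ofAdd, toAdd_mul]
        exact (AP_commute_far i j k l hij hkl h1 h2 h3 h4 _ _).eq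
      · simp only [SemidirectProduct.mul_left, SemidirectProduct.mul_right, SemidirectProduct.one_left, SemidirectProduct.one_right, psiF_inl_left, psiF_inl_right, psiF_inr_left, psiF_inr_right, map_one, MulAut.one_apply, mul_one, one_mul, Pi.mul_apply, Pi.one_apply, shiftHom_apply, toAdd_ofAdd, toAdd_mul]
    simp only [map_mul, map_inv, FreeGroup.lift_apply_of]
    have := commutatorElement_eq_one_iff_commute.mpr key
    simpa [commutatorElement_def] using this
  · -- triple
    simp only [map_mul, map_inv, FreeGroup.lift_apply_of, mul_inv_eq_one]
    refine SemidirectProduct.ext ?_ ?_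
    · funext N
      simp only [SemidirectProduct.mul_left, SemidirectProduct.mul_right, SemidirectProduct.one_left, SemidirectProduct.one_right, psiF_inl_left, psiF_inl_right, psiF_inr_left, psiF_inr_right, map_one, MulAut.one_apply, mul_one, one_mul, Pi.mul_apply, Pi.one_apply, shiftHom_apply, toAdd_ofAdd, toAdd_mul]
      refine AP_triple i j k hij hik hjk _ _ _ ?_
      rw [show (mkPair i j hij).1 = {i, j} from rfl, Finset.sum_pair hij,
        show (mkPair i k hik).1 = {i, k} from rfl, Finset.sum_pair hik,
        show (mkPair j k hjk).1 = {j, k} from rfl, Finset.sum_pair hjk]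
      have : ∀ a b c : ZMod 2, a + b + (a + c) + (b + c) = 0 := by decide
      exact this _ _ _
    · simp only [SemidirectProduct.mul_left, SemidirectProduct.mul_right, SemidirectProduct.one_left, SemidirectProduct.one_right, psiF_inl_left, psiF_inl_right, psiF_inr_left, psiF_inr_right, map_one, MulAut.one_apply, mul_one, one_mul, Pi.mul_apply, Pi.one_apply, shiftHom_apply, toAdd_ofAdd, toAdd_mul]
  · -- τ² = 1
    simp only [map_mul, FreeGroup.lift_apply_of]
    refine SemidirectProduct.ext ?_ ?_
    · funext N
      simp only [SemidirectProduct.mul_left, SemidirectProduct.mul_right, SemidirectProduct.one_left, SemidirectProduct.one_right, psiF_inl_left, psiF_inl_right, psiF_inr_left, psiF_inr_right, map_one, MulAut.one_apply, mul_one, one_mul, Pi.mul_apply, Pi.one_apply, shiftHom_apply, toAdd_ofAdd, toAdd_mul]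
    · simp only [SemidirectProduct.mul_left, SemidirectProduct.mul_right, SemidirectProduct.one_left, SemidirectProduct.one_right, psiF_inl_left, psiF_inl_right, psiF_inr_left, psiF_inr_right, map_one, MulAut.one_apply, mul_one, one_mul, Pi.mul_apply, Pi.one_apply, shiftHom_apply, toAdd_ofAdd, toAdd_mul]
      rw [← ofAdd_add, St_add_self]
      rfl
  · -- ττ commute
    have key : Commute (psiF (Sum.inr i) : W n) (psiF (Sum.inr j)) := by
      refine SemidirectProduct.ext ?_ ?_
      · funext N
        simp only [SemidirectProduct.mul_left, SemidirectProduct.mul_right, SemidirectProduct.one_left, SemidirectProduct.one_right, psiF_inl_left, psiF_inl_right, psiF_inr_left, psiF_inr_right, map_one, MulAut.one_apply, mul_one, one_mul, Pi.mul_apply, Pi.one_apply, shiftHom_apply, toAdd_ofAdd, toAdd_mul]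
      · simp only [SemidirectProduct.mul_left, SemidirectProduct.mul_right, SemidirectProduct.one_left, SemidirectProduct.one_right, psiF_inl_left, psiF_inl_right, psiF_inr_left, psiF_inr_right, map_one, MulAut.one_apply, mul_one, one_mul, Pi.mul_apply, Pi.one_apply, shiftHom_apply, toAdd_ofAdd, toAdd_mul]
        rw [← ofAdd_add, ← ofAdd_add, add_comm]
    simp only [map_mul, map_inv, FreeGroup.lift_apply_of]
    have := commutatorElement_eq_one_iff_commute.mpr key
    simpa [commutatorElement_def] using this
  · -- τᵢτⱼ a τⱼτᵢ = a
    simp only [map_mul, map_inv, FreeGroup.lift_apply_of, mul_inv_eq_one]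
    refine SemidirectProduct.ext ?_ ?_
    · funext N
      simp only [SemidirectProduct.mul_left, SemidirectProduct.mul_right, SemidirectProduct.one_left, SemidirectProduct.one_right, psiF_inl_left, psiF_inl_right, psiF_inr_left, psiF_inr_right, map_one, MulAut.one_apply, mul_one, one_mul, Pi.mul_apply, Pi.one_apply, shiftHom_apply, toAdd_ofAdd, toAdd_mul]
      rw [sum_add, sum_add, sum_single_pair, sum_single_pair,
        if_pos (mem_mkPair.mpr (Or.inl rfl)), if_pos (mem_mkPair.mpr (Or.inr rfl)),
        one_one_zmod2, add_zero]
    · simp only [SemidirectProduct.mul_left, SemidirectProduct.mul_right, SemidirectProduct.one_left, SemidirectProduct.one_right, psiF_inl_left, psiF_inl_right, psiF_inr_left, psiF_inr_right, map_one, MulAut.one_apply, mul_one, one_mul, Pi.mul_apply, Pi.one_apply, shiftHom_apply, toAdd_ofAdd, toAdd_mul]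
      rw [← ofAdd_add, ← ofAdd_add, ← ofAdd_add]
      rw [show Pi.single i (1 : ZMod 2) + Pi.single j 1 + Pi.single j 1 + Pi.single i 1
          = (0 : St n) from by
        funext x
        simp only [Pi.add_apply, Pi.single_apply, Pi.zero_apply]
        split_ifs <;> decide]
      rfl
  · -- a commutes with far τ
    have key : Commute (psiF (Sum.inl (mkPair i j h)) : W n) (psiF (Sum.inr k)) := by
      refine SemidirectProduct.ext ?_ ?_
      · funext N
        simp only [SemidirectProduct.mul_left, SemidirectProduct.mul_right, SemidirectProduct.one_left, SemidirectProduct.one_right, psiF_inl_left, psiF_inl_right, psiF_inr_left, psiF_inr_right, map_one, MulAut.one_apply, mul_one, one_mul, Pi.mul_apply, Pi.one_apply, shiftHom_apply, toAdd_ofAdd, toAdd_mul]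
        rw [sum_add, sum_single_pair,
          if_neg (by rw [mem_mkPair]; rintro (rfl | rfl) <;> simp_all), add_zero]
      · simp only [SemidirectProduct.mul_left, SemidirectProduct.mul_right, SemidirectProduct.one_left, SemidirectProduct.one_right, psiF_inl_left, psiF_inl_right, psiF_inr_left, psiF_inr_right, map_one, MulAut.one_apply, mul_one, one_mul, Pi.mul_apply, Pi.one_apply, shiftHom_apply, toAdd_ofAdd, toAdd_mul]
    simp only [map_mul, map_inv, FreeGroup.lift_apply_of]
    have := commutatorElement_eq_one_iff_commute.mpr key
    simpa [commutatorElement_def] using this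

/-- The homomorphism `Ψ : GnD2 n →* W n`. -/
def psi : GnD2 n →* W n := PresentedGroup.toGroup (psiRels (n := n))

lemma psi_of (x : DIdx n) : psi (PresentedGroup.of x) = psiF x :=
  PresentedGroup.toGroup.of _

lemma psiF_inv (x : DIdx n) : (psiF x)⁻¹ = psiF (n := n) x := by
  cases x with
  | inl s =>
    refine SemidirectProduct.ext ?_ ?_
    · funext N
      simp only [SemidirectProduct.inv_left, psiF, inv_one, map_one, MulAut.one_apply,
        Pi.inv_apply]
      exact APs_inv _ _
    · simp [psiF]
  | inr i =>
    refine SemidirectProduct.ext ?_ ?_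
    · funext N
      simp [psiF]
    · simp only [SemidirectProduct.inv_right, psiF]
      rw [← ofAdd_neg, St_neg]

lemma psi_single (x : DIdx n) (b : Bool) :
    psi (PresentedGroup.mk (gnD2Rels n) (FreeGroup.mk [(x, b)])) = psiF x := by
  cases b
  · have : FreeGroup.mk [(x, false)] = (FreeGroup.of x)⁻¹ := by
      rw [FreeGroup.of, FreeGroup.inv_mk]
      simp [FreeGroup.invRev]
    rw [this, map_inv, map_inv]
    rw [show PresentedGroup.mk (gnD2Rels n) (FreeGroup.of x) = PresentedGroup.of x from rfl,
      psi_of, psiF_inv]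
  · rw [show FreeGroup.mk [(x, true)] = FreeGroup.of x from rfl]
    rw [show PresentedGroup.mk (gnD2Rels n) (FreeGroup.of x) = PresentedGroup.of x from rfl,
      psi_of]

lemma update_eq_add (N : St n) (i : Fin n) :
    Function.update N i (N i + 1) = N + Pi.single i 1 := by
  funext x
  by_cases hx : x = i
  · subst hx; simp
  · simp [Function.update_of_ne hx, Pi.single_apply, hx]

lemma psi_mkD_left (L : List (DIdx n × Bool)) (N : St n) :
    (psi (mkD n L)).left N = chiWord n L N := by
  induction L generalizing N with
  | nil =>
    have h1 : mkD n [] = 1 := by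
      rw [mkD, ← FreeGroup.one_eq_mk, map_one]
    rw [h1, map_one]
    rfl
  | cons p L ih =>
    obtain ⟨x, b⟩ := p
    have hsplit : mkD n ((x, b) :: L) =
        PresentedGroup.mk (gnD2Rels n) (FreeGroup.mk [(x, b)]) * mkD n L := by
      rw [mkD, mkD, ← map_mul, FreeGroup.mul_mk]
      rfl
    rw [hsplit, map_mul, psi_single]
    cases x with
    | inl s =>
      rw [SemidirectProduct.mul_left]
      show (fun N => (PresentedGroup.of (s, ∑ x ∈ s.1, N x) : GnP2 n)) N *
          (shiftHom (1 : Multiplicative (St n)) (psi (mkD n L)).left) N =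
        chiWord n ((Sum.inl s, b) :: L) N
      rw [map_one]
      show (PresentedGroup.of (s, ∑ x ∈ s.1, N x) : GnP2 n) *
          (psi (mkD n L)).left N = chiWord n ((Sum.inl s, b) :: L) N
      rw [ih]
      rfl
    | inr i =>
      rw [SemidirectProduct.mul_left]
      show (1 : PiG n) N * (shiftHom (Multiplicative.ofAdd (Pi.single i 1))
          (psi (mkD n L)).left) N = chiWord n ((Sum.inr i, b) :: L) N
      rw [Pi.one_apply, one_mul, shiftHom_apply, toAdd_ofAdd, ih]
      show chiWord n L (N + Pi.single i 1) = chiWord n L (Function.update N i (N i + 1))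
      rw [update_eq_add]

/-! ### The composite `χ ∘ η` -/

/-- The subgroup of elements on which `χ ∘ η` is the identity. -/
def K (n : ℕ) : Subgroup (GnP2 n) where
  carrier := {β | (psi (eta β)).left (fun _ => 0) = β ∧ (psi (eta β)).right = 1}
  one_mem' := by
    constructor
    · rw [map_one, map_one]; rfl
    · rw [map_one, map_one]; rfl
  mul_mem' := by
    rintro a b ⟨ha1, ha2⟩ ⟨hb1, hb2⟩
    constructor
    · rw [map_mul, map_mul, SemidirectProduct.mul_left, ha2, map_one, Pi.mul_apply,
        MulAut.one_apply, ha1, hb1]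
    · rw [map_mul, map_mul, SemidirectProduct.mul_right, ha2, hb2, one_mul]
  inv_mem' := by
    rintro a ⟨ha1, ha2⟩
    constructor
    · rw [map_inv, map_inv, SemidirectProduct.inv_left, ha2, inv_one, map_one,
        MulAut.one_apply, Pi.inv_apply, ha1]
    · rw [map_inv, map_inv, SemidirectProduct.inv_right, ha2, inv_one]

lemma gen_mem_K (s : PairIdx n) (ε : ZMod 2) : (PresentedGroup.of (s, ε) : GnP2 n) ∈ K n := by
  have hval : psi (eta (PresentedGroup.of (s, ε))) =
      psi (tD s ^ ε.val) * psiF (Sum.inl s) * psi (tD s ^ ε.val) := by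
    rw [eta_of, etaF, map_mul, map_mul]
    congr 1
  have hpsiT : psi (tD s) = psiF (Sum.inr (minElt s)) := by
    rw [show tD s = PresentedGroup.of (Sum.inr (minElt s)) from rfl, psi_of]
  rcases zmod2_cases ε with rfl | rfl
  · rw [show (0 : ZMod 2).val = 0 from rfl] at hval
    simp only [pow_zero, map_one, one_mul, mul_one] at hval
    constructor
    · rw [hval]
      show (PresentedGroup.of (s, ∑ x ∈ s.1, (0 : ZMod 2)) : GnP2 n) = _
      rw [Finset.sum_const_zero]
    · rw [hval]; rfl
  · rw [show (1 : ZMod 2).val = 1 from rfl] at hval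
    simp only [pow_one] at hval
    rw [hpsiT] at hval
    constructor
    · rw [hval, SemidirectProduct.mul_left, SemidirectProduct.mul_left,
        SemidirectProduct.mul_right]
      simp only [SemidirectProduct.mul_left, SemidirectProduct.mul_right, SemidirectProduct.one_left, SemidirectProduct.one_right, psiF_inl_left, psiF_inl_right, psiF_inr_left, psiF_inr_right, map_one, MulAut.one_apply, mul_one, one_mul, Pi.mul_apply, Pi.one_apply, shiftHom_apply, toAdd_ofAdd, toAdd_mul]
      rw [sum_add, sum_single_pair, if_pos (minElt_mem s), Finset.sum_const_zero, zero_add]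
    · rw [hval, SemidirectProduct.mul_right, SemidirectProduct.mul_right]
      show Multiplicative.ofAdd (Pi.single (minElt s) 1) * 1 *
        Multiplicative.ofAdd (Pi.single (minElt s) 1) = 1
      rw [mul_one, ← ofAdd_add, St_add_self]
      rfl

lemma chi_eta (β : GnP2 n) : (psi (eta β)).left (fun _ => 0) = β :=
  (PresentedGroup.generated_by (gnP2Rels n) (K n)
    (fun p => gen_mem_K p.1 p.2) β).1

end Stmt8


/-- `χ ∘ η` is the identity on `G_{n,P}^2`, where
`η(a_{ij}^0) = a_{ij}`, `η(a_{ij}^1) = τ_i a_{ij} τ_i`. -/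
theorem stmt8 (n : ℕ) (hn : 2 < n) :
    ∃ η : GnP2 n →* GnD2 n,
      (∀ (i j : Fin n) (h : i < j),
        η (AP i j h.ne 0) = AD i j h.ne ∧
        η (AP i j h.ne 1) = T i * AD i j h.ne * T i) ∧
      ∀ (β : GnP2 n) (L : List (DIdx n × Bool)),
        mkD n L = η β → chiWord n L (fun _ => 0) = β := by
  classical
  refine ⟨Stmt8.eta, fun i j h => ⟨?_, ?_⟩, fun β L hL => ?_⟩
  · rw [show AP i j h.ne 0 = PresentedGroup.of (mkPair i j h.ne, 0) from rfl,
      Stmt8.eta_of, Stmt8.etaF_zero, Stmt8.ofD_mkPair]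
  · rw [show AP i j h.ne 1 = PresentedGroup.of (mkPair i j h.ne, 1) from rfl,
      Stmt8.eta_of, Stmt8.etaF_one]
  · calc chiWord n L (fun _ => 0)
        = (Stmt8.psi (mkD n L)).left (fun _ => 0) := (Stmt8.psi_mkD_left L _).symm
      _ = (Stmt8.psi (Stmt8.eta β)).left (fun _ => 0) := by rw [hL]
      _ = β := Stmt8.chi_eta β
end

section
/- The image of G_{n,P}^2 under the homomorphism η (sending a_{ij}^0 ↦ a_{ij} and a_{ij}^1 ↦ τ_i a_{ij} τ_i) is isomorphic to the subgroup H_{n,D}^2 of G_{n,D}^2; in particular η maps G_{n,P}^2 onto H_{n,D}^2 with inverse χ, i.e., χ ∘ η = id and η ∘ χ = id. -/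
namespace Stmt9Aux

open PresentedGroup

variable {n : ℕ}

lemma z2cases (a : ZMod 2) : a = 0 ∨ a = 1 := by revert a; decide

lemma z2add (a : ZMod 2) : a + a = 0 := by revert a; decide

lemma pair_exists (s : PairIdx n) : ∃ (i j : Fin n) (h : i ≠ j), s = mkPair i j h := by
  obtain ⟨a, b, hab, h⟩ := Finset.card_eq_two.mp s.2
  exact ⟨a, b, hab, Subtype.ext h⟩

lemma mem_mkPair {i j x : Fin n} {h : i ≠ j} : x ∈ (mkPair i j h).1 ↔ x = i ∨ x = j := by
  simp [mkPair]

lemma mk_rel {α : Type*} {rels : Set (FreeGroup α)} {r : FreeGroup α} (h : r ∈ rels) :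
    PresentedGroup.mk rels r = 1 := by
  have : r ∈ Subgroup.normalClosure rels := Subgroup.subset_normalClosure h
  exact (QuotientGroup.eq_one_iff r).2 this

lemma of_eq_mk {α : Type*} {rels : Set (FreeGroup α)} (x : α) :
    (PresentedGroup.of x : PresentedGroup rels) = PresentedGroup.mk rels (FreeGroup.of x) := rfl

/-! ### Relations in `GnP2` -/

lemma AP_sq (s : PairIdx n) (ε : ZMod 2) :
    (PresentedGroup.of (s, ε) : GnP2 n) * PresentedGroup.of (s, ε) = 1 := by
  obtain ⟨i, j, h, rfl⟩ := pair_exists s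
  have := mk_rel (rels := gnP2Rels n)
    (r := FreeGroup.of (mkPair i j h, ε) * FreeGroup.of (mkPair i j h, ε))
    (Or.inl ⟨i, j, h, ε, rfl⟩)
  simpa [of_eq_mk, map_mul] using this

lemma AP_inv (s : PairIdx n) (ε : ZMod 2) :
    (PresentedGroup.of (s, ε) : GnP2 n)⁻¹ = PresentedGroup.of (s, ε) :=
  inv_eq_of_mul_eq_one_right (AP_sq s ε)

lemma disjoint_pair {i j k l : Fin n} (hij : i ≠ j) (hkl : k ≠ l)
    (h1 : i ≠ k) (h2 : i ≠ l) (h3 : j ≠ k) (h4 : j ≠ l) :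
    Disjoint (mkPair i j hij).1 (mkPair k l hkl).1 := by
  rw [Finset.disjoint_left]
  intro x hx hx'
  rw [mem_mkPair] at hx hx'
  rcases hx with rfl | rfl <;> rcases hx' with rfl | rfl <;> simp_all

lemma disjoint_cases {s t : PairIdx n} (hd : Disjoint s.1 t.1)
    {i j k l : Fin n} {hij : i ≠ j} {hkl : k ≠ l}
    (hs : s = mkPair i j hij) (ht : t = mkPair k l hkl) :
    i ≠ k ∧ i ≠ l ∧ j ≠ k ∧ j ≠ l := by
  subst hs; subst ht
  rw [Finset.disjoint_left] at hd
  refine ⟨?_, ?_, ?_, ?_⟩ <;> rintro rfl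
  · exact hd (mem_mkPair.2 (Or.inl rfl)) (mem_mkPair.2 (Or.inl rfl))
  · exact hd (mem_mkPair.2 (Or.inl rfl)) (mem_mkPair.2 (Or.inr rfl))
  · exact hd (mem_mkPair.2 (Or.inr rfl)) (mem_mkPair.2 (Or.inl rfl))
  · exact hd (mem_mkPair.2 (Or.inr rfl)) (mem_mkPair.2 (Or.inr rfl))

lemma AP_comm (s t : PairIdx n) (ε δ : ZMod 2) (hd : Disjoint s.1 t.1) :
    Commute (PresentedGroup.of (s, ε) : GnP2 n) (PresentedGroup.of (t, δ)) := by
  obtain ⟨i, j, hij, rfl⟩ := pair_exists s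
  obtain ⟨k, l, hkl, rfl⟩ := pair_exists t
  obtain ⟨h1, h2, h3, h4⟩ := disjoint_cases hd rfl rfl
  rw [← commutatorElement_eq_one_iff_commute]
  have := mk_rel (rels := gnP2Rels n)
    (r := FreeGroup.of (mkPair i j hij, ε) * FreeGroup.of (mkPair k l hkl, δ) *
        (FreeGroup.of (mkPair i j hij, ε))⁻¹ * (FreeGroup.of (mkPair k l hkl, δ))⁻¹)
    (Or.inr (Or.inl ⟨i, j, k, l, hij, hkl, ε, δ, h1, h2, h3, h4, rfl⟩))
  simpa [of_eq_mk, map_mul, map_inv, commutatorElement_def] using this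

lemma AP_triple {i j k : Fin n} (hij : i ≠ j) (hik : i ≠ k) (hjk : j ≠ k)
    (εij εik εjk : ZMod 2) (hsum : εij + εik + εjk = 0) :
    (PresentedGroup.of (mkPair i j hij, εij) : GnP2 n) *
      PresentedGroup.of (mkPair i k hik, εik) * PresentedGroup.of (mkPair j k hjk, εjk) =
    PresentedGroup.of (mkPair j k hjk, εjk) * PresentedGroup.of (mkPair i k hik, εik) *
      PresentedGroup.of (mkPair i j hij, εij) := by
  have := mk_rel (rels := gnP2Rels n)
    (r := FreeGroup.of (mkPair i j hij, εij) * FreeGroup.of (mkPair i k hik, εik) *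
        FreeGroup.of (mkPair j k hjk, εjk) *
        (FreeGroup.of (mkPair j k hjk, εjk) * FreeGroup.of (mkPair i k hik, εik) *
         FreeGroup.of (mkPair i j hij, εij))⁻¹)
    (Or.inr (Or.inr ⟨i, j, k, hij, hik, hjk, εij, εik, εjk, hsum, rfl⟩))
  rw [of_eq_mk, of_eq_mk, of_eq_mk, ← mul_inv_eq_one]
  simpa [map_mul, map_inv] using this

end Stmt9Aux
namespace Stmt9Aux

variable {n : ℕ}

/-- The crossing generator of `GnD2` indexed by a pair. -/
def ADp (s : PairIdx n) : GnD2 n := PresentedGroup.of (Sum.inl s)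

lemma AD_eq_ADp (i j : Fin n) (h : i ≠ j) : AD i j h = ADp (mkPair i j h) := rfl

lemma T_eq (i : Fin n) : T i = (PresentedGroup.of (Sum.inr i) : GnD2 n) := rfl

lemma AD_sq (s : PairIdx n) : ADp (n := n) s * ADp s = 1 := by
  obtain ⟨i, j, h, rfl⟩ := pair_exists s
  have := mk_rel (rels := gnD2Rels n)
    (r := FreeGroup.of (Sum.inl (mkPair i j h) : DIdx n) *
        FreeGroup.of (Sum.inl (mkPair i j h) : DIdx n))
    (Or.inl ⟨i, j, h, rfl⟩)
  simpa [ADp, of_eq_mk, map_mul] using this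

lemma AD_inv (s : PairIdx n) : (ADp (n := n) s)⁻¹ = ADp s :=
  inv_eq_of_mul_eq_one_right (AD_sq s)

lemma AD_comm (s t : PairIdx n) (hd : Disjoint s.1 t.1) :
    Commute (ADp (n := n) s) (ADp t) := by
  obtain ⟨i, j, hij, rfl⟩ := pair_exists s
  obtain ⟨k, l, hkl, rfl⟩ := pair_exists t
  obtain ⟨h1, h2, h3, h4⟩ := disjoint_cases hd rfl rfl
  rw [← commutatorElement_eq_one_iff_commute]
  have := mk_rel (rels := gnD2Rels n)
    (r := FreeGroup.of (Sum.inl (mkPair i j hij) : DIdx n) *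
        FreeGroup.of (Sum.inl (mkPair k l hkl) : DIdx n) *
        (FreeGroup.of (Sum.inl (mkPair i j hij) : DIdx n))⁻¹ *
        (FreeGroup.of (Sum.inl (mkPair k l hkl) : DIdx n))⁻¹)
    (Or.inr (Or.inl ⟨i, j, k, l, hij, hkl, h1, h2, h3, h4, rfl⟩))
  simpa [ADp, of_eq_mk, map_mul, map_inv, commutatorElement_def] using this

lemma AD_triple {i j k : Fin n} (hij : i ≠ j) (hik : i ≠ k) (hjk : j ≠ k) :
    ADp (n := n) (mkPair i j hij) * ADp (mkPair i k hik) * ADp (mkPair j k hjk) =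
    ADp (mkPair j k hjk) * ADp (mkPair i k hik) * ADp (mkPair i j hij) := by
  have := mk_rel (rels := gnD2Rels n)
    (r := FreeGroup.of (Sum.inl (mkPair i j hij) : DIdx n) *
        FreeGroup.of (Sum.inl (mkPair i k hik) : DIdx n) *
        FreeGroup.of (Sum.inl (mkPair j k hjk) : DIdx n) *
        (FreeGroup.of (Sum.inl (mkPair j k hjk) : DIdx n) *
         FreeGroup.of (Sum.inl (mkPair i k hik) : DIdx n) *
         FreeGroup.of (Sum.inl (mkPair i j hij) : DIdx n))⁻¹)
    (Or.inr (Or.inr (Or.inl ⟨i, j, k, hij, hik, hjk, rfl⟩)))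
  rw [ADp, ADp, ADp, of_eq_mk, of_eq_mk, of_eq_mk, ← mul_inv_eq_one]
  simpa [map_mul, map_inv] using this

lemma T_sq (i : Fin n) : (T i : GnD2 n) * T i = 1 := by
  have := mk_rel (rels := gnD2Rels n)
    (r := FreeGroup.of (Sum.inr i : DIdx n) * FreeGroup.of (Sum.inr i : DIdx n))
    (Or.inr (Or.inr (Or.inr (Or.inl ⟨i, rfl⟩))))
  simpa [T_eq, of_eq_mk, map_mul] using this

lemma T_inv (i : Fin n) : (T i : GnD2 n)⁻¹ = T i :=
  inv_eq_of_mul_eq_one_right (T_sq i)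

lemma T_comm (i j : Fin n) : Commute (T i : GnD2 n) (T j) := by
  rw [← commutatorElement_eq_one_iff_commute]
  have := mk_rel (rels := gnD2Rels n)
    (r := FreeGroup.of (Sum.inr i : DIdx n) * FreeGroup.of (Sum.inr j : DIdx n) *
        (FreeGroup.of (Sum.inr i : DIdx n))⁻¹ * (FreeGroup.of (Sum.inr j : DIdx n))⁻¹)
    (Or.inr (Or.inr (Or.inr (Or.inr (Or.inl ⟨i, j, rfl⟩)))))
  simpa [T_eq, of_eq_mk, map_mul, map_inv, commutatorElement_def] using this

lemma TAD_rel {i j : Fin n} (h : i ≠ j) :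
    (T i : GnD2 n) * T j * ADp (mkPair i j h) * T j * T i = ADp (mkPair i j h) := by
  have := mk_rel (rels := gnD2Rels n)
    (r := FreeGroup.of (Sum.inr i : DIdx n) * FreeGroup.of (Sum.inr j : DIdx n) *
        FreeGroup.of (Sum.inl (mkPair i j h) : DIdx n) *
        FreeGroup.of (Sum.inr j : DIdx n) * FreeGroup.of (Sum.inr i : DIdx n) *
        (FreeGroup.of (Sum.inl (mkPair i j h) : DIdx n))⁻¹)
    (Or.inr (Or.inr (Or.inr (Or.inr (Or.inr (Or.inl ⟨i, j, h, rfl⟩))))))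
  rw [T_eq, T_eq, ADp, of_eq_mk, of_eq_mk, of_eq_mk, ← mul_inv_eq_one]
  simpa [map_mul, map_inv] using this

lemma TAD_comm {s : PairIdx n} {k : Fin n} (hk : k ∉ s.1) :
    Commute (ADp (n := n) s) (T k) := by
  obtain ⟨i, j, h, rfl⟩ := pair_exists s
  have hki : k ≠ i := fun e => hk (mem_mkPair.2 (Or.inl e))
  have hkj : k ≠ j := fun e => hk (mem_mkPair.2 (Or.inr e))
  rw [← commutatorElement_eq_one_iff_commute]
  have := mk_rel (rels := gnD2Rels n)
    (r := FreeGroup.of (Sum.inl (mkPair i j h) : DIdx n) *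
        FreeGroup.of (Sum.inr k : DIdx n) *
        (FreeGroup.of (Sum.inl (mkPair i j h) : DIdx n))⁻¹ *
        (FreeGroup.of (Sum.inr k : DIdx n))⁻¹)
    (Or.inr (Or.inr (Or.inr (Or.inr (Or.inr (Or.inr ⟨i, j, k, h, hki, hkj, rfl⟩))))))
  simpa [ADp, T_eq, of_eq_mk, map_mul, map_inv, commutatorElement_def] using this

/-- Conjugating a crossing by `τ` of either of its endpoints gives the same result. -/
lemma Tconj_mem (s : PairIdx n) {x y : Fin n} (hx : x ∈ s.1) (hy : y ∈ s.1) :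
    (T x : GnD2 n) * ADp s * T x = T y * ADp s * T y := by
  obtain ⟨i, j, h, rfl⟩ := pair_exists s
  have key : (T i : GnD2 n) * ADp (mkPair i j h) * T i = T j * ADp (mkPair i j h) * T j := by
    have h1 := TAD_rel (n := n) h
    have := congrArg (fun z => (T i : GnD2 n) * z * T i) h1
    -- this : T i * (T i * T j * ADp _ * T j * T i) * T i = T i * ADp _ * T i
    calc (T i : GnD2 n) * ADp (mkPair i j h) * T i
        = T i * (T i * T j * ADp (mkPair i j h) * T j * T i) * T i := by rw [h1]
      _ = (T i * T i) * (T j * ADp (mkPair i j h) * T j) * (T i * T i) := by group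
      _ = T j * ADp (mkPair i j h) * T j := by rw [T_sq]; group
  rw [mem_mkPair] at hx hy
  rcases hx with rfl | rfl <;> rcases hy with rfl | rfl
  · rfl
  · exact key
  · exact key.symm
  · rfl

/-- Conjugating a crossing by both `τ`'s of its endpoints gives it back. -/
lemma Tconj2 (s : PairIdx n) {x y : Fin n} (hx : x ∈ s.1) (hy : y ∈ s.1) (hxy : x ≠ y) :
    (T x : GnD2 n) * (T y * ADp s * T y) * T x = ADp s := by
  obtain ⟨i, j, h, rfl⟩ := pair_exists s
  rw [mem_mkPair] at hx hy
  rcases hx with rfl | rfl <;> rcases hy with rfl | rfl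
  · exact absurd rfl hxy
  · have := TAD_rel (n := n) h
    calc (T x : GnD2 n) * (T y * ADp (mkPair x y h) * T y) * T x
        = T x * T y * ADp (mkPair x y h) * T y * T x := by group
      _ = ADp (mkPair x y h) := TAD_rel h
  · have hc := (T_comm (n := n) x y).eq
    calc (T x : GnD2 n) * (T y * ADp (mkPair y x h) * T y) * T x
        = (T x * T y) * ADp (mkPair y x h) * (T y * T x) := by group
      _ = (T y * T x) * ADp (mkPair y x h) * (T x * T y) := by rw [hc]
      _ = T y * T x * ADp (mkPair y x h) * T x * T y := by group
      _ = ADp (mkPair y x h) := TAD_rel h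
  · exact absurd rfl hxy

end Stmt9Aux
namespace Stmt9Aux

variable {n : ℕ}

/-- A distinguished element of a pair. -/
def pid (s : PairIdx n) : Fin n :=
  s.1.min' (Finset.card_pos.mp (by rw [s.2]; norm_num))

lemma pid_mem (s : PairIdx n) : pid s ∈ s.1 := Finset.min'_mem _ _

/-- Image of the generator `a_s^ε` under `η`. -/
def etaGen (x : PairIdx n × ZMod 2) : GnD2 n :=
  (T (pid x.1)) ^ (x.2.val) * ADp x.1 * (T (pid x.1)) ^ (x.2.val)

lemma Tpow_invol (i : Fin n) (m : ℕ) : (T i : GnD2 n) ^ m * (T i) ^ m = 1 := by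
  have h2 : (T i : GnD2 n) ^ 2 = 1 := by rw [sq]; exact T_sq i
  rw [← pow_add, ← two_mul, pow_mul, h2, one_pow]

lemma etaGen_mem (s : PairIdx n) (ε : ZMod 2) {x : Fin n} (hx : x ∈ s.1) :
    etaGen (s, ε) = (T x) ^ (ε.val) * ADp s * (T x) ^ (ε.val) := by
  rcases z2cases ε with rfl | rfl
  · rfl
  · show (T (pid s)) ^ 1 * ADp s * (T (pid s)) ^ 1 = _
    simp only [pow_one, show ((1 : ZMod 2)).val = 1 from rfl]
    exact (Tconj_mem s (pid_mem s) hx)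

lemma etaGen_zero (s : PairIdx n) : etaGen (n := n) (s, 0) = ADp s := by
  show (T (pid s)) ^ ((0 : ZMod 2).val) * ADp s * (T (pid s)) ^ ((0 : ZMod 2).val) = _
  norm_num [show ((0 : ZMod 2)).val = 0 from rfl]

lemma etaGen_one_mem (s : PairIdx n) {x : Fin n} (hx : x ∈ s.1) :
    etaGen (s, 1) = T x * ADp s * T x := by
  rw [etaGen_mem s 1 hx, show ((1 : ZMod 2)).val = 1 from rfl, pow_one]

/-! In any group: the three "parity triple" computations. -/
section abstractTriple
variable {G : Type*} [Group G] (A B C t : G)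

lemma L110 (ht : t * t = 1) (hC : t * C = C * t) (h : A * B * C = C * B * A) :
    (t * A * t) * (t * B * t) * C = C * (t * B * t) * (t * A * t) := by
  calc (t * A * t) * (t * B * t) * C = t * A * (t * t) * B * (t * C) := by group
    _ = t * A * 1 * B * (C * t) := by rw [ht, hC]
    _ = t * (A * B * C) * t := by group
    _ = t * (C * B * A) * t := by rw [h]
    _ = (t * C) * B * (A * t) := by group
    _ = (C * t) * B * (A * t) := by rw [hC]
    _ = C * (t * B * (t * t) * A * t) := by rw [ht]; group
    _ = C * (t * B * t) * (t * A * t) := by group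

lemma L101 (ht : t * t = 1) (hB : t * B = B * t) (h : A * B * C = C * B * A) :
    (t * A * t) * B * (t * C * t) = (t * C * t) * B * (t * A * t) := by
  calc (t * A * t) * B * (t * C * t) = t * A * (t * B) * t * C * t := by group
    _ = t * A * (B * t) * t * C * t := by rw [hB]
    _ = t * A * B * (t * t) * C * t := by group
    _ = t * A * B * 1 * C * t := by rw [ht]
    _ = t * (A * B * C) * t := by group
    _ = t * (C * B * A) * t := by rw [h]
    _ = t * C * (t * t) * B * A * t := by rw [ht]; group
    _ = t * C * t * (t * B) * A * t := by group
    _ = t * C * t * (B * t) * A * t := by rw [hB]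
    _ = (t * C * t) * B * (t * A * t) := by group

lemma L011 (ht : t * t = 1) (hA : t * A = A * t) (h : A * B * C = C * B * A) :
    A * (t * B * t) * (t * C * t) = (t * C * t) * (t * B * t) * A := by
  calc A * (t * B * t) * (t * C * t) = (A * t) * B * (t * t) * C * t := by group
    _ = (t * A) * B * 1 * C * t := by rw [ht, hA]
    _ = t * (A * B * C) * t := by group
    _ = t * (C * B * A) * t := by rw [h]
    _ = t * C * (t * t) * B * (A * t) := by rw [ht]; group
    _ = t * C * (t * t) * B * (t * A) := by rw [hA]
    _ = (t * C * t) * (t * B * t) * A := by group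

end abstractTriple

lemma not_mem_left {i j k : Fin n} (h : i ≠ j) (hki : k ≠ i) (hkj : k ≠ j) :
    k ∉ (mkPair i j h).1 := by
  rw [mem_mkPair]; rintro (rfl | rfl) <;> simp_all

lemma eta_rels :
    ∀ r ∈ gnP2Rels n, FreeGroup.lift (etaGen (n := n)) r = 1 := by
  rintro r (⟨i, j, h, ε, rfl⟩ | ⟨i, j, k, l, hij, hkl, ε, δ, h1, h2, h3, h4, rfl⟩ |
    ⟨i, j, k, hij, hik, hjk, εij, εik, εjk, hsum, rfl⟩)
  · -- squares
    simp only [map_mul, FreeGroup.lift_apply_of]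
    set s := mkPair i j h
    set X := (T (pid s) : GnD2 n) ^ (ε.val) with hXdef
    have hX : X * X = 1 := Tpow_invol _ _
    have hA : ADp (n := n) s * ADp s = 1 := AD_sq s
    show (X * ADp s * X) * (X * ADp s * X) = 1
    calc (X * ADp s * X) * (X * ADp s * X) = X * ADp s * (X * X) * ADp s * X := by group
      _ = X * (ADp s * ADp s) * X := by rw [hX]; group
      _ = X * X := by rw [hA]; group
      _ = 1 := hX
  · -- far commutation
    simp only [map_mul, map_inv, FreeGroup.lift_apply_of]
    set s := mkPair i j hij
    set t := mkPair k l hkl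
    have hd : Disjoint s.1 t.1 := disjoint_pair hij hkl h1 h2 h3 h4
    have c1 : Commute (T (pid s) : GnD2 n) (T (pid t)) := T_comm _ _
    have c2 : Commute (T (pid s) : GnD2 n) (ADp t) :=
      (TAD_comm (Finset.disjoint_left.mp hd (pid_mem s))).symm
    have c3 : Commute (ADp (n := n) s) (T (pid t)) :=
      TAD_comm (Finset.disjoint_right.mp hd (pid_mem t))
    have c4 : Commute (ADp (n := n) s) (ADp t) := AD_comm s t hd
    have hc : Commute (etaGen (s, ε)) (etaGen (t, δ)) := by
      have hX : Commute ((T (pid s) : GnD2 n) ^ (ε.val)) (etaGen (t, δ)) :=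
        (((c1.pow_pow _ _).mul_right (c2.pow_left _)).mul_right (c1.pow_pow _ _))
      have hA : Commute (ADp (n := n) s) (etaGen (t, δ)) :=
        (((c3.pow_right _).mul_right c4).mul_right (c3.pow_right _))
      exact (hX.mul_left hA).mul_left hX
    rw [← commutatorElement_def]
    exact commutatorElement_eq_one_iff_commute.mpr hc
  · -- triple relation
    simp only [map_mul, map_inv, FreeGroup.lift_apply_of]
    rw [mul_inv_eq_one]
    have mi_ij : i ∈ (mkPair i j hij).1 := mem_mkPair.2 (Or.inl rfl)
    have mj_ij : j ∈ (mkPair i j hij).1 := mem_mkPair.2 (Or.inr rfl)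
    have mi_ik : i ∈ (mkPair i k hik).1 := mem_mkPair.2 (Or.inl rfl)
    have mk_ik : k ∈ (mkPair i k hik).1 := mem_mkPair.2 (Or.inr rfl)
    have mj_jk : j ∈ (mkPair j k hjk).1 := mem_mkPair.2 (Or.inl rfl)
    have mk_jk : k ∈ (mkPair j k hjk).1 := mem_mkPair.2 (Or.inr rfl)
    have htr := AD_triple (n := n) hij hik hjk
    rcases z2cases εij with rfl | rfl <;> rcases z2cases εik with rfl | rfl <;>
      rcases z2cases εjk with rfl | rfl
    · simp only [etaGen_zero]; exact htr
    · exact absurd hsum (by decide)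
    · exact absurd hsum (by decide)
    · -- (0,1,1): conjugate by T k
      rw [etaGen_zero, etaGen_one_mem _ mk_ik, etaGen_one_mem _ mk_jk]
      exact L011 _ _ _ _ (T_sq k)
        ((TAD_comm (not_mem_left hij hik.symm hjk.symm)).symm.eq) htr
    · exact absurd hsum (by decide)
    · -- (1,0,1): conjugate by T j
      rw [etaGen_one_mem _ mj_ij, etaGen_zero, etaGen_one_mem _ mj_jk]
      exact L101 _ _ _ _ (T_sq j)
        ((TAD_comm (not_mem_left hik hij.symm hjk)).symm.eq) htr
    · -- (1,1,0): conjugate by T i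
      rw [etaGen_one_mem _ mi_ij, etaGen_one_mem _ mi_ik, etaGen_zero]
      exact L110 _ _ _ _ (T_sq i)
        ((TAD_comm (not_mem_left hjk hij hik)).symm.eq) htr
    · exact absurd hsum (by decide)

/-- The homomorphism `η : GnP2 → GnD2`. -/
def eta : GnP2 n →* GnD2 n := PresentedGroup.toGroup eta_rels

lemma eta_of (s : PairIdx n) (ε : ZMod 2) :
    eta (PresentedGroup.of (s, ε)) = etaGen (s, ε) :=
  PresentedGroup.toGroup.of eta_rels

end Stmt9Aux
namespace Stmt9Aux

variable {n : ℕ}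

lemma alpha_rels (v : Fin n → ZMod 2) :
    ∀ r ∈ gnP2Rels n, FreeGroup.lift
      (fun x : PairIdx n × ZMod 2 =>
        (PresentedGroup.of (x.1, x.2 + ∑ y ∈ x.1.1, v y) : GnP2 n)) r = 1 := by
  rintro r (⟨i, j, h, ε, rfl⟩ | ⟨i, j, k, l, hij, hkl, ε, δ, h1, h2, h3, h4, rfl⟩ |
    ⟨i, j, k, hij, hik, hjk, εij, εik, εjk, hsum, rfl⟩)
  · simp only [map_mul, FreeGroup.lift_apply_of]
    exact AP_sq _ _
  · simp only [map_mul, map_inv, FreeGroup.lift_apply_of]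
    rw [← commutatorElement_def]
    exact commutatorElement_eq_one_iff_commute.mpr
      (AP_comm _ _ _ _ (disjoint_pair hij hkl h1 h2 h3 h4))
  · simp only [map_mul, map_inv, FreeGroup.lift_apply_of]
    rw [mul_inv_eq_one]
    refine AP_triple hij hik hjk _ _ _ ?_
    have hp : ∀ (a b : Fin n) (hab : a ≠ b), ∑ y ∈ (mkPair a b hab).1, v y = v a + v b :=
      fun a b hab => Finset.sum_pair hab
    rw [hp, hp, hp]
    revert hsum
    have : ∀ a b c x y z : ZMod 2,
        a + b + c = 0 → a + (x + y) + (b + (x + z)) + (c + (y + z)) = 0 := by decide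
    exact this εij εik εjk (v i) (v j) (v k)

/-- The parity-shift endomorphism of `GnP2`. -/
def alphaHom (v : Fin n → ZMod 2) : GnP2 n →* GnP2 n :=
  PresentedGroup.toGroup (alpha_rels v)

lemma alphaHom_of (v : Fin n → ZMod 2) (s : PairIdx n) (ε : ZMod 2) :
    alphaHom v (PresentedGroup.of (s, ε)) = PresentedGroup.of (s, ε + ∑ y ∈ s.1, v y) :=
  PresentedGroup.toGroup.of (alpha_rels v)

lemma alphaHom_zero : alphaHom (n := n) 0 = MonoidHom.id _ := by
  ext x
  rw [alphaHom_of]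
  simp

lemma alphaHom_add (v w : Fin n → ZMod 2) :
    alphaHom (n := n) (v + w) = (alphaHom v).comp (alphaHom w) := by
  ext x
  obtain ⟨s, ε⟩ := x
  rw [MonoidHom.comp_apply, alphaHom_of, alphaHom_of, alphaHom_of]
  congr 1
  ext1
  · rfl
  · show ε + ∑ y ∈ s.1, (v + w) y = ε + ∑ y ∈ s.1, w y + ∑ y ∈ s.1, v y
    simp only [Pi.add_apply, Finset.sum_add_distrib]
    ring

lemma alphaHom_invol (v : Fin n → ZMod 2) (x : GnP2 n) :
    alphaHom v (alphaHom v x) = x := by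
  have : (alphaHom (n := n) v).comp (alphaHom v) = MonoidHom.id _ := by
    rw [← alphaHom_add, show v + v = 0 from funext fun i => z2add (v i), alphaHom_zero]
  exact DFunLike.congr_fun this x

/-- The parity-shift automorphism. -/
def alphaAut (v : Fin n → ZMod 2) : MulAut (GnP2 n) :=
  { toFun := alphaHom v
    invFun := alphaHom v
    left_inv := alphaHom_invol v
    right_inv := alphaHom_invol v
    map_mul' := map_mul _ }

/-- The action of the parity group on `GnP2`. -/
def phiAct : Multiplicative (Fin n → ZMod 2) →* MulAut (GnP2 n) where
  toFun v := alphaAut (Multiplicative.toAdd v)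
  map_one' := by
    ext x
    show alphaHom 0 x = x
    rw [alphaHom_zero]; rfl
  map_mul' a b := by
    ext x
    show alphaHom (Multiplicative.toAdd a + Multiplicative.toAdd b) x
      = alphaHom (Multiplicative.toAdd a) (alphaHom (Multiplicative.toAdd b) x)
    rw [alphaHom_add]; rfl

/-- The big group `GnP2 ⋊ (ZMod 2)ⁿ`. -/
abbrev BigGrp (n : ℕ) := SemidirectProduct (GnP2 n) (Multiplicative (Fin n → ZMod 2)) phiAct

/-- Generator images for `Φ : GnD2 → BigGrp`. -/
def phiGen : DIdx n → BigGrp n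
  | Sum.inl s => SemidirectProduct.inl (PresentedGroup.of (s, 0))
  | Sum.inr i => SemidirectProduct.inr (Multiplicative.ofAdd (Pi.single i (1 : ZMod 2)))

lemma phiAct_ofAdd_of (v : Fin n → ZMod 2) (s : PairIdx n) (ε : ZMod 2) :
    phiAct (Multiplicative.ofAdd v) (PresentedGroup.of (s, ε))
      = PresentedGroup.of (s, ε + ∑ y ∈ s.1, v y) :=
  alphaHom_of v s ε

lemma sum_single_mem (s : PairIdx n) {i : Fin n} (hi : i ∈ s.1) :
    ∑ y ∈ s.1, Pi.single (M := fun _ => ZMod 2) i 1 y = 1 := by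
  rw [Finset.sum_pi_single']
  simp [hi]

lemma sum_single_not_mem (s : PairIdx n) {i : Fin n} (hi : i ∉ s.1) :
    ∑ y ∈ s.1, Pi.single (M := fun _ => ZMod 2) i 1 y = 0 := by
  rw [Finset.sum_pi_single']
  simp [hi]

lemma inr_mul_inl {N G : Type*} [Group N] [Group G] {φ : G →* MulAut N} (g : G) (m : N) :
    (SemidirectProduct.inr g : SemidirectProduct N G φ) * SemidirectProduct.inl m
      = SemidirectProduct.inl (φ g m) * SemidirectProduct.inr g := by
  rw [SemidirectProduct.inl_aut, mul_assoc, mul_assoc, ← map_mul, inv_mul_cancel,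
    map_one, mul_one]

lemma single_self_mul (i : Fin n) :
    (Multiplicative.ofAdd (Pi.single (M := fun _ => ZMod 2) i 1)) *
      (Multiplicative.ofAdd (Pi.single (M := fun _ => ZMod 2) i 1)) = 1 := by
  rw [← ofAdd_add, ← ofAdd_zero]
  congr 1
  funext x
  exact z2add _

lemma sd_rel6 {N G : Type*} [Group N] [Group G] {φ : G →* MulAut N}
    (u w : G) (a : N) (h1 : φ u (φ w a) = a)
    (hu : ∀ x, φ u (φ u x) = x) (hw : ∀ x, φ w (φ w x) = x) (h2 : u * w * w * u = 1) :
    SemidirectProduct.inr u * SemidirectProduct.inr w * SemidirectProduct.inl a *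
      SemidirectProduct.inr w * SemidirectProduct.inr u * (SemidirectProduct.inl a)⁻¹
      = (1 : SemidirectProduct N G φ) := by
  refine SemidirectProduct.ext ?_ ?_
  · simp [h1, hu, hw]
  · simpa using h2

lemma sd_rel7 {N G : Type*} [Group N] [Group G] {φ : G →* MulAut N}
    (v : G) (a : N) (h1 : φ v a = a) :
    SemidirectProduct.inl a * SemidirectProduct.inr v * (SemidirectProduct.inl a)⁻¹ *
      (SemidirectProduct.inr v)⁻¹ = (1 : SemidirectProduct N G φ) := by
  refine SemidirectProduct.ext ?_ ?_
  · simp [h1]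
  · simp

lemma z2abba (a b : ZMod 2) : a + b + b + a = 0 := by revert a b; decide

lemma phi_rels : ∀ r ∈ gnD2Rels n, FreeGroup.lift (phiGen (n := n)) r = 1 := by
  rintro r (⟨i, j, h, rfl⟩ | ⟨i, j, k, l, hij, hkl, h1, h2, h3, h4, rfl⟩ |
    ⟨i, j, k, hij, hik, hjk, rfl⟩ | ⟨i, rfl⟩ | ⟨i, j, rfl⟩ | ⟨i, j, h, rfl⟩ |
    ⟨i, j, k, h, hki, hkj, rfl⟩)
  · simp only [map_mul, FreeGroup.lift_apply_of, phiGen]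
    rw [← map_mul, AP_sq, map_one]
  · simp only [map_mul, map_inv, FreeGroup.lift_apply_of, phiGen]
    rw [← commutatorElement_def]
    exact commutatorElement_eq_one_iff_commute.mpr
      ((AP_comm _ _ _ _ (disjoint_pair hij hkl h1 h2 h3 h4)).map SemidirectProduct.inl)
  · simp only [map_mul, map_inv, FreeGroup.lift_apply_of, phiGen]
    rw [mul_inv_eq_one, ← map_mul, ← map_mul, ← map_mul, ← map_mul]
    exact congrArg _ (AP_triple hij hik hjk 0 0 0 (by decide))
  · simp only [map_mul, FreeGroup.lift_apply_of, phiGen]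
    rw [← map_mul, single_self_mul, map_one]
  · simp only [map_mul, map_inv, FreeGroup.lift_apply_of, phiGen]
    rw [← commutatorElement_def]
    exact commutatorElement_eq_one_iff_commute.mpr
      ((Commute.all _ _).map SemidirectProduct.inr)
  · simp only [map_mul, map_inv, FreeGroup.lift_apply_of, phiGen]
    refine sd_rel6 _ _ _ ?_ (fun x => alphaHom_invol _ x) (fun x => alphaHom_invol _ x) ?_
    · rw [phiAct_ofAdd_of, phiAct_ofAdd_of,
        sum_single_mem _ (mem_mkPair.2 (Or.inr rfl)),
        sum_single_mem _ (mem_mkPair.2 (Or.inl rfl)),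
        show ((0 : ZMod 2) + 1 + 1 : ZMod 2) = 0 from by decide]
    · rw [← ofAdd_add, ← ofAdd_add, ← ofAdd_add, show
        Pi.single (M := fun _ => ZMod 2) i 1 + Pi.single j 1 + Pi.single j 1 +
          Pi.single i 1 = 0 from funext fun x => z2abba _ _, ofAdd_zero]
  · simp only [map_mul, map_inv, FreeGroup.lift_apply_of, phiGen]
    refine sd_rel7 _ _ ?_
    rw [phiAct_ofAdd_of, sum_single_not_mem _ (not_mem_left h hki hkj), add_zero]

/-- The homomorphism `Φ : GnD2 → BigGrp`. -/
def phiBig : GnD2 n →* BigGrp n := PresentedGroup.toGroup phi_rels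

lemma phiBig_of (x : DIdx n) : phiBig (PresentedGroup.of x) = phiGen x :=
  PresentedGroup.toGroup.of phi_rels

end Stmt9Aux
namespace Stmt9Aux

variable {n : ℕ}

/-! Word decomposition lemmas. -/

lemma mk_single_false {α : Type*} (x : α) :
    FreeGroup.mk [(x, false)] = (FreeGroup.of x)⁻¹ := by
  rw [show (FreeGroup.of x : FreeGroup α) = FreeGroup.mk [(x, true)] from rfl,
    FreeGroup.inv_mk]
  rfl

lemma mkD_cons (x : DIdx n) (b : Bool) (L : List (DIdx n × Bool)) :
    mkD n ((x, b) :: L) =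
      (if b then (PresentedGroup.of x : GnD2 n) else (PresentedGroup.of x)⁻¹) * mkD n L := by
  show PresentedGroup.mk _ (FreeGroup.mk ((x, b) :: L)) = _
  rw [show ((x, b) :: L) = [(x, b)] ++ L from rfl, ← FreeGroup.mul_mk, map_mul]
  cases b
  · rw [mk_single_false, map_inv]
    rfl
  · rfl

lemma mkD_cons_inl (s : PairIdx n) (b : Bool) (L : List (DIdx n × Bool)) :
    mkD n ((Sum.inl s, b) :: L) = ADp s * mkD n L := by
  rw [mkD_cons]
  cases b
  · rw [if_neg (by simp)]
    exact congrArg (· * mkD n L) (AD_inv s)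
  · rfl

lemma mkD_cons_inr (i : Fin n) (b : Bool) (L : List (DIdx n × Bool)) :
    mkD n ((Sum.inr i, b) :: L) = T i * mkD n L := by
  rw [mkD_cons]
  cases b
  · rw [if_neg (by simp)]
    exact congrArg (· * mkD n L) (T_inv i)
  · rfl

lemma mkD_nil : mkD n [] = 1 := by
  show PresentedGroup.mk _ (FreeGroup.mk []) = 1
  rw [← FreeGroup.one_eq_mk, map_one]

lemma tauCount_cons_inl (x : Fin n) (s : PairIdx n) (b : Bool) (L : List (DIdx n × Bool)) :
    tauCount x ((Sum.inl s, b) :: L) = tauCount x L := by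
  simp [tauCount, List.countP_cons]

lemma tauCount_cons_inr (x i : Fin n) (b : Bool) (L : List (DIdx n × Bool)) :
    tauCount x ((Sum.inr i, b) :: L) = tauCount x L + (if i = x then 1 else 0) := by
  simp [tauCount, List.countP_cons]

lemma update_eq_add_single (N : Fin n → ZMod 2) (i : Fin n) :
    Function.update N i (N i + 1) = N + Pi.single i 1 := by
  funext x
  rcases eq_or_ne x i with rfl | hx
  · simp
  · simp [Function.update_of_ne hx, Pi.single_eq_of_ne hx]

/-! The key computation: `Φ` of a word. -/

lemma chi_phi (L : List (DIdx n × Bool)) :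
    ∀ N : Fin n → ZMod 2, chiWord n L N = alphaHom N ((phiBig (mkD n L)).left) := by
  induction L with
  | nil =>
    intro N
    rw [mkD_nil, map_one]
    show (1 : GnP2 n) = alphaHom N (1 : GnP2 n)
    rw [map_one]
  | cons hd tl ih =>
    obtain ⟨x, b⟩ := hd
    intro N
    cases x with
    | inl s =>
      rw [mkD_cons_inl, map_mul, show phiBig (ADp s) = phiGen (Sum.inl s) from phiBig_of _]
      show PresentedGroup.of (s, ∑ y ∈ s.1, N y) * chiWord n tl N = _
      rw [show (phiGen (Sum.inl s) * phiBig (mkD n tl)).left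
          = PresentedGroup.of (s, 0) * (phiBig (mkD n tl)).left by
        rw [show phiGen (Sum.inl s)
            = (SemidirectProduct.inl (PresentedGroup.of (s, 0)) : BigGrp n) from rfl,
          SemidirectProduct.mul_left, SemidirectProduct.left_inl,
          SemidirectProduct.right_inl, map_one, MulAut.one_apply]]
      rw [map_mul, alphaHom_of, zero_add, ih N]
    | inr i =>
      rw [mkD_cons_inr, map_mul, show phiBig (T i) = phiGen (Sum.inr i) from phiBig_of _]
      show chiWord n tl (Function.update N i (N i + 1)) = _
      rw [show (phiGen (Sum.inr i) * phiBig (mkD n tl)).left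
          = alphaHom (Pi.single i 1) ((phiBig (mkD n tl)).left) by
        rw [show phiGen (Sum.inr i) = (SemidirectProduct.inr
            (Multiplicative.ofAdd (Pi.single i (1 : ZMod 2))) : BigGrp n) from rfl,
          SemidirectProduct.mul_left, SemidirectProduct.left_inr,
          SemidirectProduct.right_inr, one_mul]
        rfl]
      rw [ih, update_eq_add_single]
      exact (DFunLike.congr_fun (alphaHom_add N (Pi.single i 1)) _)

lemma phi_right (L : List (DIdx n × Bool)) :
    (phiBig (mkD n L)).right =
      Multiplicative.ofAdd (fun i => ((tauCount i L : ℕ) : ZMod 2)) := by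
  induction L with
  | nil =>
    rw [mkD_nil, map_one]
    show (1 : Multiplicative (Fin n → ZMod 2)) = _
    rw [show (fun i : Fin n => ((tauCount i ([] : List (DIdx n × Bool)) : ℕ) : ZMod 2)) = 0 by
      funext i; simp [tauCount]]
    rfl
  | cons hd tl ih =>
    obtain ⟨x, b⟩ := hd
    cases x with
    | inl s =>
      rw [mkD_cons_inl, map_mul, show phiBig (ADp s) = phiGen (Sum.inl s) from phiBig_of _]
      rw [SemidirectProduct.mul_right, show (phiGen (Sum.inl s) : BigGrp n).right = 1 from rfl,
        one_mul, ih]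
      exact congrArg Multiplicative.ofAdd
        (funext fun i => by rw [tauCount_cons_inl])
    | inr i =>
      rw [mkD_cons_inr, map_mul, show phiBig (T i) = phiGen (Sum.inr i) from phiBig_of _]
      rw [SemidirectProduct.mul_right, show (phiGen (Sum.inr i) : BigGrp n).right
          = Multiplicative.ofAdd (Pi.single i (1 : ZMod 2)) from rfl, ih, ← ofAdd_add]
      congr 1
      funext x
      rw [Pi.add_apply, tauCount_cons_inr]
      rcases eq_or_ne x i with rfl | hx
      · rw [if_pos rfl, Pi.single_eq_same]
        push_cast
        ring
      · rw [if_neg (Ne.symm hx), Pi.single_eq_of_ne hx]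
        push_cast
        ring

/-! `Φ ∘ η = inl`. -/

lemma sd_conj_inv {N G : Type*} [Group N] [Group G] {φ : G →* MulAut N}
    (u : G) (a : N) (hu : u * u = 1) :
    SemidirectProduct.inr u * SemidirectProduct.inl a * SemidirectProduct.inr u
      = (SemidirectProduct.inl (φ u a) : SemidirectProduct N G φ) := by
  refine SemidirectProduct.ext ?_ ?_
  · simp
  · simpa using hu

lemma phi_eta (β : GnP2 n) : phiBig (eta β) = SemidirectProduct.inl β := by
  have h : (phiBig.comp (eta (n := n))) = SemidirectProduct.inl := by
    refine PresentedGroup.ext fun x => ?_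
    obtain ⟨s, ε⟩ := x
    rw [MonoidHom.comp_apply, eta_of]
    rcases z2cases ε with rfl | rfl
    · rw [etaGen_zero]
      exact phiBig_of _
    · rw [etaGen_one_mem s (pid_mem s), map_mul, map_mul,
        show phiBig (T (pid s)) = phiGen (Sum.inr (pid s)) from phiBig_of _,
        show phiBig (ADp s) = phiGen (Sum.inl s) from phiBig_of _]
      show SemidirectProduct.inr _ * SemidirectProduct.inl _ * SemidirectProduct.inr _ = _
      rw [sd_conj_inv _ _ (single_self_mul (pid s)), phiAct_ofAdd_of,
        sum_single_mem s (pid_mem s), zero_add]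
  exact DFunLike.congr_fun h β

end Stmt9Aux
namespace Stmt9Aux

variable {n : ℕ}

/-- Product of `τ`'s with parity exponents, over a list of indices. -/
def prodT (l : List (Fin n)) (N : Fin n → ZMod 2) : GnD2 n :=
  (l.map fun j => (T j) ^ ((N j).val)).prod

lemma prodT_nil (N : Fin n → ZMod 2) : prodT [] N = 1 := rfl

lemma prodT_cons (j : Fin n) (l : List (Fin n)) (N : Fin n → ZMod 2) :
    prodT (j :: l) N = (T j) ^ ((N j).val) * prodT l N := by
  simp [prodT]

lemma commute_T_prodT (i : Fin n) (l : List (Fin n)) (N : Fin n → ZMod 2) :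
    Commute (T i : GnD2 n) (prodT l N) := by
  induction l with
  | nil => exact Commute.one_right _
  | cons j l ih =>
    rw [prodT_cons]
    exact ((T_comm i j).pow_right _).mul_right ih

lemma prodT_invol (l : List (Fin n)) (N : Fin n → ZMod 2) : prodT l N * prodT l N = 1 := by
  induction l with
  | nil => rw [prodT_nil, one_mul]
  | cons j l ih =>
    rw [prodT_cons]
    have hc : prodT l N * (T j) ^ ((N j).val) = (T j) ^ ((N j).val) * prodT l N :=
      ((commute_T_prodT j l N).symm.pow_right _).eq
    calc (T j) ^ ((N j).val) * prodT l N * ((T j) ^ ((N j).val) * prodT l N)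
        = (T j) ^ ((N j).val) * (prodT l N * (T j) ^ ((N j).val)) * prodT l N := by group
      _ = (T j) ^ ((N j).val) * ((T j) ^ ((N j).val) * prodT l N) * prodT l N := by rw [hc]
      _ = ((T j) ^ ((N j).val) * (T j) ^ ((N j).val)) * (prodT l N * prodT l N) := by group
      _ = 1 := by rw [Tpow_invol, ih, one_mul]

lemma Tpow_val_succ (i : Fin n) (a : ZMod 2) :
    (T i : GnD2 n) ^ (a.val) * T i = (T i) ^ ((a + 1).val) := by
  rcases z2cases a with rfl | rfl
  · rw [show ((0 : ZMod 2)).val = 0 from rfl, show ((0 : ZMod 2) + 1).val = 1 from rfl,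
      pow_zero, pow_one, one_mul]
  · rw [show ((1 : ZMod 2)).val = 1 from rfl, show ((1 : ZMod 2) + 1).val = 0 from rfl,
      pow_one, pow_zero]
    exact T_sq i

lemma prodT_not_mem {i : Fin n} {l : List (Fin n)} (hi : i ∉ l) (N : Fin n → ZMod 2) :
    prodT l (N + Pi.single i 1) = prodT l N := by
  induction l with
  | nil => rfl
  | cons j l ih =>
    have hji : j ≠ i := fun e => hi (e ▸ List.mem_cons_self (a := j) (l := l))
    rw [prodT_cons, prodT_cons, ih (fun h => hi (List.mem_cons_of_mem j h)),
      Pi.add_apply, Pi.single_eq_of_ne hji, add_zero]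

lemma prodT_mul_T {i : Fin n} {l : List (Fin n)} (hnd : l.Nodup) (hi : i ∈ l)
    (N : Fin n → ZMod 2) :
    prodT l N * T i = prodT l (N + Pi.single i 1) := by
  induction l with
  | nil => exact absurd hi (List.not_mem_nil (a := i))
  | cons j l ih =>
    rw [List.nodup_cons] at hnd
    rcases List.mem_cons.mp hi with rfl | hmem
    · -- head case
      rw [prodT_cons, prodT_cons, prodT_not_mem hnd.1 N, Pi.add_apply, Pi.single_eq_same]
      have hc : prodT l N * (T i : GnD2 n) = T i * prodT l N :=
        ((commute_T_prodT i l N).symm).eq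
      calc (T i) ^ ((N i).val) * prodT l N * T i
          = (T i) ^ ((N i).val) * (prodT l N * T i) := by group
        _ = (T i) ^ ((N i).val) * (T i * prodT l N) := by rw [hc]
        _ = ((T i) ^ ((N i).val) * T i) * prodT l N := by group
        _ = (T i) ^ ((N i + 1).val) * prodT l N := by rw [Tpow_val_succ]
    · have hji : j ≠ i := fun e => hnd.1 (e ▸ hmem)
      rw [prodT_cons, prodT_cons, mul_assoc, ih hnd.2 hmem,
        Pi.add_apply, Pi.single_eq_of_ne hji, add_zero]

/-- The running-parity sum of `N` over the members of `s` occurring in `l`. -/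
def csum (l : List (Fin n)) (N : Fin n → ZMod 2) (s : PairIdx n) : ZMod 2 :=
  (l.map fun x => if x ∈ s.1 then N x else 0).sum

lemma csum_cons (j : Fin n) (l : List (Fin n)) (N : Fin n → ZMod 2) (s : PairIdx n) :
    csum (j :: l) N s = (if j ∈ s.1 then N j else 0) + csum l N s := by
  simp [csum]

lemma prodT_conj (s : PairIdx n) (l : List (Fin n)) (N : Fin n → ZMod 2) :
    prodT l N * ADp s * prodT l N =
      (T (pid s)) ^ ((csum l N s).val) * ADp s * (T (pid s)) ^ ((csum l N s).val) := by
  induction l with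
  | nil =>
    rw [prodT_nil, show csum ([] : List (Fin n)) N s = 0 from rfl,
      show ((0 : ZMod 2)).val = 0 from rfl, pow_zero, one_mul, mul_one]
  | cons j l ih =>
    rw [prodT_cons, csum_cons]
    set X := (T j : GnD2 n) ^ ((N j).val) with hX
    set P := prodT l N with hP
    set c := csum l N s with hc
    have hXP : X * P = P * X := ((commute_T_prodT j l N).pow_left _).eq
    have step1 : (X * P) * ADp s * (X * P) = X * (P * ADp s * P) * X := by
      calc (X * P) * ADp s * (X * P) = (X * P) * ADp s * (P * X) := by rw [← hXP]
        _ = X * (P * ADp s * P) * X := by group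
    rw [step1, ih]
    by_cases hjs : j ∈ s.1
    · rw [if_pos hjs]
      rcases z2cases (N j) with hNj | hNj
      · rw [hX, hNj, show ((0 : ZMod 2)).val = 0 from rfl, pow_zero, one_mul, mul_one,
          zero_add]
      · rw [hX, hNj, show ((1 : ZMod 2)).val = 1 from rfl, pow_one]
        rcases z2cases c with hcv | hcv
        · rw [hcv, show ((0 : ZMod 2)).val = 0 from rfl,
            show ((1 : ZMod 2) + 0).val = 1 from rfl, pow_zero, pow_one, one_mul, mul_one]
          exact Tconj_mem s hjs (pid_mem s)
        · rw [hcv, show ((1 : ZMod 2)).val = 1 from rfl,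
            show ((1 : ZMod 2) + 1).val = 0 from rfl, pow_one, pow_zero, one_mul, mul_one]
          rcases eq_or_ne j (pid s) with rfl | hne
          · calc (T (pid s) : GnD2 n) * (T (pid s) * ADp s * T (pid s)) * T (pid s)
                = (T (pid s) * T (pid s)) * ADp s * (T (pid s) * T (pid s)) := by group
              _ = ADp s := by rw [T_sq]; group
          · exact Tconj2 s hjs (pid_mem s) hne
    · rw [if_neg hjs, zero_add]
      have h1 : Commute X ((T (pid s) : GnD2 n) ^ (c.val)) :=
        (T_comm j (pid s)).pow_pow _ _
      have h2 : Commute X (ADp (n := n) s) := ((TAD_comm hjs).symm.pow_left _)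
      have hQ : Commute X ((T (pid s)) ^ (c.val) * ADp s * (T (pid s)) ^ (c.val)) :=
        (h1.mul_right h2).mul_right h1
      calc X * ((T (pid s)) ^ (c.val) * ADp s * (T (pid s)) ^ (c.val)) * X
          = (T (pid s)) ^ (c.val) * ADp s * (T (pid s)) ^ (c.val) * (X * X) := by
            rw [hQ.eq]; group
        _ = (T (pid s)) ^ (c.val) * ADp s * (T (pid s)) ^ (c.val) := by
            rw [hX, Tpow_invol, mul_one]

/-- The product of all `τ_i^{N i}`. -/
def TT (N : Fin n → ZMod 2) : GnD2 n := prodT (List.finRange n) N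

lemma TT_invol (N : Fin n → ZMod 2) : TT N * TT N = 1 := prodT_invol _ _

lemma TT_mul_T (N : Fin n → ZMod 2) (i : Fin n) :
    TT N * T i = TT (N + Pi.single i 1) :=
  prodT_mul_T (List.nodup_finRange n) (List.mem_finRange i) N

lemma csum_finRange (N : Fin n → ZMod 2) (s : PairIdx n) :
    csum (List.finRange n) N s = ∑ y ∈ s.1, N y := by
  rw [csum, ← Fin.sum_univ_def]
  simp

lemma TT_conj (N : Fin n → ZMod 2) (s : PairIdx n) :
    TT N * ADp s * TT N = etaGen (s, ∑ y ∈ s.1, N y) := by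
  rw [show etaGen (s, ∑ y ∈ s.1, N y)
      = (T (pid s)) ^ ((∑ y ∈ s.1, N y).val) * ADp s * (T (pid s)) ^ ((∑ y ∈ s.1, N y).val)
      from rfl, ← csum_finRange N s]
  exact prodT_conj s (List.finRange n) N

lemma TT_zero : TT (n := n) 0 = 1 := by
  have : ∀ l : List (Fin n), prodT l 0 = 1 := by
    intro l
    induction l with
    | nil => rfl
    | cons j l ih =>
      rw [prodT_cons, ih, mul_one, show ((0 : Fin n → ZMod 2) j).val = 0 from rfl, pow_zero]
  exact this _

/-- The main computation for `η ∘ χ`. -/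
lemma eta_chi (L : List (DIdx n × Bool)) :
    ∀ N : Fin n → ZMod 2,
      eta (chiWord n L N) = TT N * mkD n L * TT (fun i => N i + ((tauCount i L : ℕ) : ZMod 2)) := by
  induction L with
  | nil =>
    intro N
    show eta 1 = _
    rw [map_one, mkD_nil, mul_one,
      show (fun i : Fin n => N i + ((tauCount i ([] : List (DIdx n × Bool)) : ℕ) : ZMod 2)) = N
        from funext fun i => by simp [tauCount], TT_invol]
  | cons hd tl ih =>
    obtain ⟨x, b⟩ := hd
    intro N
    cases x with
    | inl s =>
      show eta (PresentedGroup.of (s, ∑ y ∈ s.1, N y) * chiWord n tl N) = _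
      rw [map_mul, eta_of, ← TT_conj, ih N, mkD_cons_inl,
        show (fun i : Fin n => N i + ((tauCount i ((Sum.inl s, b) :: tl) : ℕ) : ZMod 2))
          = (fun i : Fin n => N i + ((tauCount i tl : ℕ) : ZMod 2))
          from funext fun i => by rw [tauCount_cons_inl]]
      calc (TT N * ADp s * TT N) * (TT N * mkD n tl *
            TT (fun i => N i + ((tauCount i tl : ℕ) : ZMod 2)))
          = TT N * ADp s * (TT N * TT N) * mkD n tl *
            TT (fun i => N i + ((tauCount i tl : ℕ) : ZMod 2)) := by group
        _ = TT N * (ADp s * mkD n tl) *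
            TT (fun i => N i + ((tauCount i tl : ℕ) : ZMod 2)) := by rw [TT_invol]; group
    | inr i =>
      show eta (chiWord n tl (Function.update N i (N i + 1))) = _
      have hfun : (fun x : Fin n => N x + ((tauCount x ((Sum.inr i, b) :: tl) : ℕ) : ZMod 2))
          = (fun x : Fin n => (N + Pi.single (M := fun _ => ZMod 2) i 1) x + ((tauCount x tl : ℕ) : ZMod 2)) := by
        funext x
        rw [tauCount_cons_inr, Pi.add_apply]
        rcases eq_or_ne x i with rfl | hx
        · rw [if_pos rfl, Pi.single_eq_same]
          push_cast
          ring
        · rw [if_neg (Ne.symm hx), Pi.single_eq_of_ne hx]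
          push_cast
          ring
      rw [ih, mkD_cons_inr, update_eq_add_single, ← TT_mul_T, hfun]
      group

end Stmt9Aux
/-- the image of `G_{n,P}^2` under `η` is (isomorphic to) `H_{n,D}^2`:
`η` is injective, its range is exactly the subgroup `H_{n,D}^2` of elements all of whose
representing words have an even number of each `τ_i`, and `χ` is a two-sided inverse:
`χ ∘ η = id` and `η ∘ χ = id`. -/
theorem stmt9 (n : ℕ) (hn : 2 < n) :
    ∃ η : GnP2 n →* GnD2 n,
      (∀ (i j : Fin n) (h : i < j),
        η (AP i j h.ne 0) = AD i j h.ne ∧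
        η (AP i j h.ne 1) = T i * AD i j h.ne * T i) ∧
      Function.Injective η ∧
      Set.range η =
        {β : GnD2 n | ∀ L : List (DIdx n × Bool),
          mkD n L = β → ∀ i : Fin n, Even (tauCount i L)} ∧
      (∀ (β : GnP2 n) (L : List (DIdx n × Bool)),
        mkD n L = η β → chiWord n L (fun _ => 0) = β) ∧
      (∀ L : List (DIdx n × Bool),
        (∀ i : Fin n, Even (tauCount i L)) →
        η (chiWord n L (fun _ => 0)) = mkD n L) := by
  classical
  open Stmt9Aux in
  -- the last bullet, proved first since it is used for the range computation
  have bullet5 : ∀ L : List (DIdx n × Bool),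
      (∀ i : Fin n, Even (tauCount i L)) →
      Stmt9Aux.eta (chiWord n L (fun _ => 0)) = mkD n L := by
    intro L hEven
    have h := Stmt9Aux.eta_chi (n := n) L (fun _ => 0)
    have hfun : (fun i : Fin n => (fun _ : Fin n => (0 : ZMod 2)) i +
        ((tauCount i L : ℕ) : ZMod 2)) = (0 : Fin n → ZMod 2) := by
      funext i
      obtain ⟨m, hm⟩ := hEven i
      rw [hm]
      push_cast
      rw [zero_add]
      exact Stmt9Aux.z2add _
    rw [h, hfun, show (fun _ : Fin n => (0 : ZMod 2)) = (0 : Fin n → ZMod 2) from rfl,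
      Stmt9Aux.TT_zero, one_mul, mul_one]
  refine ⟨Stmt9Aux.eta, ?_, ?_, ?_, ?_, bullet5⟩
  · intro i j h
    constructor
    · show Stmt9Aux.eta (PresentedGroup.of (mkPair i j h.ne, 0)) = _
      rw [Stmt9Aux.eta_of, Stmt9Aux.etaGen_zero]
      rfl
    · show Stmt9Aux.eta (PresentedGroup.of (mkPair i j h.ne, 1)) = _
      rw [Stmt9Aux.eta_of,
        Stmt9Aux.etaGen_one_mem _ (Stmt9Aux.mem_mkPair.2 (Or.inl rfl))]
      rfl
  · intro a b hab
    have h := congrArg Stmt9Aux.phiBig hab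
    rw [Stmt9Aux.phi_eta, Stmt9Aux.phi_eta] at h
    exact SemidirectProduct.inl_injective h
  · ext β
    constructor
    · rintro ⟨γ, rfl⟩ L hL i
      have h1 := Stmt9Aux.phi_right (n := n) L
      rw [hL, Stmt9Aux.phi_eta, SemidirectProduct.right_inl] at h1
      have h2 : (fun i : Fin n => ((tauCount i L : ℕ) : ZMod 2)) = 0 :=
        Multiplicative.ofAdd.injective (h1.symm.trans (ofAdd_zero).symm)
      have h3 : ((tauCount i L : ℕ) : ZMod 2) = 0 := congrFun h2 i
      rcases (ZMod.natCast_eq_zero_iff _ 2).mp h3 with ⟨m, hm⟩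
      exact ⟨m, by omega⟩
    · intro hβ
      obtain ⟨x, hx⟩ := PresentedGroup.mk_surjective (gnD2Rels n) β
      have hw : mkD n x.toWord = β := by
        show PresentedGroup.mk _ (FreeGroup.mk x.toWord) = β
        rw [FreeGroup.mk_toWord]
        exact hx
      exact ⟨chiWord n x.toWord (fun _ => 0), by rw [bullet5 x.toWord (hβ x.toWord hw), hw]⟩
  · intro β L hL
    have h := Stmt9Aux.chi_phi (n := n) L (fun _ => 0)
    rw [hL, Stmt9Aux.phi_eta] at h
    rw [h, show (SemidirectProduct.inl β : Stmt9Aux.BigGrp n).left = β from rfl]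
    exact DFunLike.congr_fun (Stmt9Aux.alphaHom_zero (n := n)) β
end

section
/- The assignment κ(a_{ij}) = a_{ij} and κ(τ_i) = a_{i(n+1)} extends to a well-defined group homomorphism κ : G_{n,D}^2 → G_{n+1}^2 / N, where N is the normal closure of the relations a_{i(n+1)}a_{j(n+1)} = a_{j(n+1)}a_{i(n+1)} for all i ≠ j. -/
open scoped commutatorElement

/-- The forbidden relators: commutators `[a_{i(n+1)}, a_{j(n+1)}]` in `G_{n+1}^2`. -/
def forbiddenRels (n : ℕ) : Set (Gn2 (n + 1)) :=
  {x | ∃ (i j : Fin n) (h : i ≠ j),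
    x = ⁅A2 i.castSucc (Fin.last n) (Fin.castSucc_lt_last i).ne,
         A2 j.castSucc (Fin.last n) (Fin.castSucc_lt_last j).ne⁆}

/-- The quotient `G_{n+1}^2 / ⟨a_{i(n+1)}a_{j(n+1)} = a_{j(n+1)}a_{i(n+1)}⟩`. -/
abbrev Gn2Quot (n : ℕ) := Gn2 (n + 1) ⧸ Subgroup.normalClosure (forbiddenRels n)

/-- The projection `G_{n+1}^2 → G_{n+1}^2 / ⟨a_{i(n+1)}a_{j(n+1)} = a_{j(n+1)}a_{i(n+1)}⟩`. -/
def toQuot (n : ℕ) : Gn2 (n + 1) →* Gn2Quot n :=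
  QuotientGroup.mk' (Subgroup.normalClosure (forbiddenRels n))

section Stmt11Aux

lemma mkPair_comm {n : ℕ} (i j : Fin n) (h : i ≠ j) : mkPair i j h = mkPair j i h.symm :=
  Subtype.ext (Finset.pair_comm i j)

/-- Push a pair index from `Fin n` to `Fin (n+1)` via `castSucc`. -/
def liftPair {n : ℕ} (s : PairIdx n) : PairIdx (n + 1) :=
  ⟨s.1.image Fin.castSucc, by
    rw [Finset.card_image_of_injective _ (Fin.castSucc_injective n)]; exact s.2⟩

lemma liftPair_mkPair {n : ℕ} (i j : Fin n) (h : i ≠ j) :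
    liftPair (mkPair i j h) = mkPair i.castSucc j.castSucc ((Fin.castSucc_injective n).ne h) :=
  Subtype.ext (by simp [liftPair, mkPair])

lemma A2_eq_mk {n : ℕ} (i j : Fin n) (h : i ≠ j) :
    A2 i j h = PresentedGroup.mk (gn2Rels n) (FreeGroup.of (mkPair i j h)) := rfl

lemma gn2_rel_one {n : ℕ} {r : FreeGroup (PairIdx n)} (hr : r ∈ gn2Rels n) :
    PresentedGroup.mk (gn2Rels n) r = 1 :=
  (QuotientGroup.eq_one_iff r).2 (Subgroup.subset_normalClosure hr)

lemma A2_sq {n : ℕ} (i j : Fin n) (h : i ≠ j) : A2 i j h * A2 i j h = 1 := by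
  have := gn2_rel_one (n := n) (Or.inl ⟨i, j, h, rfl⟩)
  rwa [map_mul] at this

lemma A2_comm {n : ℕ} {i j k l : Fin n} (hij : i ≠ j) (hkl : k ≠ l)
    (hik : i ≠ k) (hil : i ≠ l) (hjk : j ≠ k) (hjl : j ≠ l) :
    A2 i j hij * A2 k l hkl = A2 k l hkl * A2 i j hij := by
  have := gn2_rel_one (n := n)
    (Or.inr (Or.inl ⟨i, j, k, l, hij, hkl, hik, hil, hjk, hjl, rfl⟩))
  rw [map_mul, map_mul, map_mul, map_inv, map_inv] at this
  rw [mul_inv_eq_one] at this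
  rw [mul_inv_eq_iff_eq_mul] at this
  exact this

lemma A2_triple {n : ℕ} (i j k : Fin n) (hij : i ≠ j) (hik : i ≠ k) (hjk : j ≠ k) :
    A2 i j hij * A2 i k hik * A2 j k hjk = A2 j k hjk * A2 i k hik * A2 i j hij := by
  have := gn2_rel_one (n := n) (Or.inr (Or.inr ⟨i, j, k, hij, hik, hjk, rfl⟩))
  rw [map_mul, map_mul, map_mul, map_inv, map_mul, map_mul] at this
  rwa [mul_inv_eq_one] at this

lemma B_sq {n : ℕ} (i j : Fin (n + 1)) (h : i ≠ j) :
    toQuot n (A2 i j h) * toQuot n (A2 i j h) = 1 := by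
  rw [← map_mul, A2_sq, map_one]

lemma B_inv {n : ℕ} (i j : Fin (n + 1)) (h : i ≠ j) :
    (toQuot n (A2 i j h))⁻¹ = toQuot n (A2 i j h) :=
  inv_eq_of_mul_eq_one_right (B_sq i j h)

lemma B_comm {n : ℕ} {i j k l : Fin (n + 1)} (hij : i ≠ j) (hkl : k ≠ l)
    (hik : i ≠ k) (hil : i ≠ l) (hjk : j ≠ k) (hjl : j ≠ l) :
    toQuot n (A2 i j hij) * toQuot n (A2 k l hkl) =
      toQuot n (A2 k l hkl) * toQuot n (A2 i j hij) := by
  rw [← map_mul, ← map_mul, A2_comm hij hkl hik hil hjk hjl]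

lemma B_triple {n : ℕ} (i j k : Fin (n + 1)) (hij : i ≠ j) (hik : i ≠ k) (hjk : j ≠ k) :
    toQuot n (A2 i j hij) * toQuot n (A2 i k hik) * toQuot n (A2 j k hjk) =
      toQuot n (A2 j k hjk) * toQuot n (A2 i k hik) * toQuot n (A2 i j hij) := by
  rw [← map_mul, ← map_mul, ← map_mul, ← map_mul, A2_triple]

lemma B_last_comm {n : ℕ} {i j : Fin n} (h : i ≠ j) :
    toQuot n (A2 i.castSucc (Fin.last n) (Fin.castSucc_lt_last i).ne) *
      toQuot n (A2 j.castSucc (Fin.last n) (Fin.castSucc_lt_last j).ne) =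
    toQuot n (A2 j.castSucc (Fin.last n) (Fin.castSucc_lt_last j).ne) *
      toQuot n (A2 i.castSucc (Fin.last n) (Fin.castSucc_lt_last i).ne) := by
  have h1 : toQuot n ⁅A2 i.castSucc (Fin.last n) (Fin.castSucc_lt_last i).ne,
      A2 j.castSucc (Fin.last n) (Fin.castSucc_lt_last j).ne⁆ = 1 := by
    apply (QuotientGroup.eq_one_iff _).2
    exact Subgroup.subset_normalClosure ⟨i, j, h, rfl⟩
  rw [commutatorElement_def, map_mul, map_mul, map_mul, map_inv, map_inv,
    mul_inv_eq_one, mul_inv_eq_iff_eq_mul] at h1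
  exact h1

end Stmt11Aux


/-- the assignment `κ(a_{ij}) = a_{ij}`, `κ(τ_i) = a_{i(n+1)}` extends to a
well-defined homomorphism `κ : G_{n,D}^2 → G_{n+1}^2 / N`, `N` the normal closure of the
commutators `[a_{i(n+1)}, a_{j(n+1)}]`. -/
theorem stmt11 (n : ℕ) (hn : 2 < n) :
    ∃ κ : GnD2 n →* Gn2Quot n,
      (∀ (i j : Fin n) (h : i ≠ j),
        κ (AD i j h) = toQuot n (A2 i.castSucc j.castSucc ((Fin.castSucc_injective n).ne h))) ∧
      (∀ i : Fin n,
        κ (T i) = toQuot n (A2 i.castSucc (Fin.last n) (Fin.castSucc_lt_last i).ne)) := by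
  
  classical
  set L : Fin (n + 1) := Fin.last n with hL
  let f : DIdx n → Gn2Quot n := Sum.elim
    (fun s => toQuot n (PresentedGroup.mk (gn2Rels (n + 1)) (FreeGroup.of (liftPair s))))
    (fun i => toQuot n (A2 i.castSucc L (Fin.castSucc_lt_last i).ne))
  have hf_inl : ∀ (i j : Fin n) (h : i ≠ j),
      f (Sum.inl (mkPair i j h)) =
        toQuot n (A2 i.castSucc j.castSucc ((Fin.castSucc_injective n).ne h)) := by
    intro i j h
    simp only [f, Sum.elim_inl, liftPair_mkPair]
    rfl
  have hf_inr : ∀ i : Fin n,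
      f (Sum.inr i) = toQuot n (A2 i.castSucc L (Fin.castSucc_lt_last i).ne) := fun i => rfl
  have hrels : ∀ r ∈ gnD2Rels n, FreeGroup.lift f r = 1 := by
    intro r hr
    rcases hr with ⟨i, j, h, rfl⟩ | ⟨i, j, k, l, hij, hkl, hik, hil, hjk, hjl, rfl⟩ |
      ⟨i, j, k, hij, hik, hjk, rfl⟩ | ⟨i, rfl⟩ | ⟨i, j, rfl⟩ | ⟨i, j, h, rfl⟩ |
      ⟨i, j, k, h, hki, hkj, rfl⟩
    · simp only [map_mul, FreeGroup.lift_apply_of, hf_inl]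
      exact B_sq _ _ _
    · simp only [map_mul, map_inv, FreeGroup.lift_apply_of, hf_inl]
      rw [mul_inv_eq_one, mul_inv_eq_iff_eq_mul]
      exact B_comm _ _ ((Fin.castSucc_injective n).ne hik) ((Fin.castSucc_injective n).ne hil)
        ((Fin.castSucc_injective n).ne hjk) ((Fin.castSucc_injective n).ne hjl)
    · simp only [map_mul, map_inv, FreeGroup.lift_apply_of, hf_inl]
      rw [mul_inv_eq_one]
      exact B_triple _ _ _ _ _ _
    · simp only [map_mul, FreeGroup.lift_apply_of, hf_inl, hf_inr]
      exact B_sq _ _ _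
    · simp only [map_mul, map_inv, FreeGroup.lift_apply_of, hf_inl, hf_inr]
      rw [mul_inv_eq_one, mul_inv_eq_iff_eq_mul]
      rcases eq_or_ne i j with rfl | hij
      · rfl
      · exact B_last_comm hij
    · simp only [map_mul, map_inv, FreeGroup.lift_apply_of, hf_inl, hf_inr]
      set x := toQuot n (A2 i.castSucc L (Fin.castSucc_lt_last i).ne) with hx
      set y := toQuot n (A2 j.castSucc L (Fin.castSucc_lt_last j).ne) with hy
      set c := toQuot n (A2 i.castSucc j.castSucc ((Fin.castSucc_injective n).ne h)) with hc
      have hcomm : x * y = y * x := B_last_comm h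
      have htrip : c * x * y = y * x * c :=
        B_triple i.castSucc j.castSucc L ((Fin.castSucc_injective n).ne h)
          (Fin.castSucc_lt_last i).ne (Fin.castSucc_lt_last j).ne
      have hxsq : x * x = 1 := B_sq _ _ _
      have hysq : y * y = 1 := B_sq _ _ _
      have key : x * y * c * y * x = c := by
        rw [hcomm, ← htrip, mul_assoc (c * x) y y, hysq, mul_one, mul_assoc c x x, hxsq, mul_one]
      rw [key, mul_inv_cancel]
    · simp only [map_mul, map_inv, FreeGroup.lift_apply_of, hf_inl, hf_inr]
      rw [mul_inv_eq_one, mul_inv_eq_iff_eq_mul]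
      exact B_comm _ _ ((Fin.castSucc_injective n).ne hki.symm)
        (Fin.castSucc_lt_last i).ne ((Fin.castSucc_injective n).ne hkj.symm)
        (Fin.castSucc_lt_last j).ne
  refine ⟨PresentedGroup.toGroup hrels, fun i j h => ?_, fun i => ?_⟩
  · rw [AD, PresentedGroup.toGroup.of, hf_inl]
  · rw [T, PresentedGroup.toGroup.of]
    exact hf_inr i
end
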